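/- arXiv:0907.2009 — 4 statements merged into one kernel-verified Lean document; each statement's English description precedes it below -/
import Mathlib

section
/- Let W be a non-negative random variable with E W = 1 and let W^e be a random variable having the equilibrium distribution with respect to W. Then for every β > 0, d_K(L(W), Exp(1)) ≤ 12β + 2·P[|W^e − W| > β]. -/
open MeasureTheory ProbabilityTheory Set
open scoped ENNReal

noncomputable section

/-- The Kolmogorov distance between two measures on `ℝ`. -/
def dK (P Q : Measure ℝ) : ℝ :=
  ⨆ z : ℝ, |(P (Iic z)).toReal - (Q (Iic z)).toReal|

/-- `We` has the equilibrium distribution with respect to `W`: its law has density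
`P[W > x] / E W` on `[0,∞)` with respect to Lebesgue measure. -/
def IsEquilibrium {Ω : Type*} [MeasurableSpace Ω] (μ : Measure Ω) (W We : Ω → ℝ) : Prop :=
  Measure.map We μ =
    volume.withDensity (fun x =>
      if 0 ≤ x then μ {ω | x < W ω} / ENNReal.ofReal (∫ ω, W ω ∂μ) else 0)

private lemma fubini_aux' {w : ℝ → ℝ} (hw : Measurable w) {C : ℝ} (hC0 : 0 ≤ C) {z : ℝ}
    (hC : ∀ s ∈ Ioc (0:ℝ) z, |w s| ≤ C) :
    ∫ t in Ioc 0 z, Real.exp t * ∫ s in Ioc 0 t, w s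
      = ∫ s in Ioc 0 z, (Real.exp z - Real.exp s) * w s := by
  set f : ℝ → ℝ → ℝ := fun t s => if s ≤ t then Real.exp t * w s else 0 with hf
  have hfm : Measurable (Function.uncurry f) := by
    apply Measurable.ite (measurableSet_le measurable_snd measurable_fst)
    · exact ((Real.measurable_exp.comp measurable_fst).mul (hw.comp measurable_snd))
    · exact measurable_const
  have hint : Integrable (Function.uncurry f)
      ((volume.restrict (Ioc 0 z)).prod (volume.restrict (Ioc 0 z))) := by
    refine Integrable.mono' (integrable_const (Real.exp z * C)) hfm.aestronglyMeasurable ?_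
    rw [Measure.prod_restrict, ae_restrict_iff' ((measurableSet_Ioc).prod measurableSet_Ioc)]
    filter_upwards with p hp
    obtain ⟨hp1, hp2⟩ := hp
    simp only [Function.uncurry, hf]
    split_ifs with h
    · rw [Real.norm_eq_abs, abs_mul, Real.abs_exp]
      exact mul_le_mul (Real.exp_le_exp.2 hp1.2) (hC _ hp2) (abs_nonneg _) (Real.exp_pos _).le
    · simpa using mul_nonneg (Real.exp_pos z).le hC0
  have step1 : ∀ t ∈ Ioc (0:ℝ) z,
      Real.exp t * ∫ s in Ioc 0 t, w s = ∫ s in Ioc 0 z, f t s := by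
    intro t ht
    have h0 : ∀ s, f t s = (Iic t).indicator (fun s => Real.exp t * w s) s := by
      intro s; simp [hf, indicator_apply, Iic]
    simp_rw [h0]
    rw [integral_indicator measurableSet_Iic, Measure.restrict_restrict measurableSet_Iic]
    have h1 : Iic t ∩ Ioc 0 z = Ioc 0 t := by
      ext x; simp only [mem_inter_iff, mem_Iic, mem_Ioc]
      exact ⟨fun ⟨h1, h2, h3⟩ => ⟨h2, h1⟩, fun ⟨h1, h2⟩ => ⟨h2, h1, h2.trans ht.2⟩⟩
    rw [h1, integral_const_mul]
  have step2 : ∀ s ∈ Ioc (0:ℝ) z,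
      (∫ t in Ioc 0 z, f t s) = (Real.exp z - Real.exp s) * w s := by
    intro s hs
    have h1 : ∀ t, f t s = (Ici s).indicator (fun t => Real.exp t * w s) t := by
      intro t; simp [hf, indicator_apply, Ici]
    simp_rw [h1]
    rw [integral_indicator measurableSet_Ici, Measure.restrict_restrict measurableSet_Ici]
    have h2 : Ici s ∩ Ioc 0 z = Icc s z := by
      ext x; simp only [mem_inter_iff, mem_Ici, mem_Ioc, mem_Icc]
      exact ⟨fun ⟨ha, _, hb⟩ => ⟨ha, hb⟩, fun ⟨ha, hb⟩ => ⟨ha, hs.1.trans_le ha, hb⟩⟩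
    rw [h2, integral_mul_const, integral_Icc_eq_integral_Ioc,
      ← intervalIntegral.integral_of_le hs.2, integral_exp]
  calc ∫ t in Ioc 0 z, Real.exp t * ∫ s in Ioc 0 t, w s
      = ∫ t in Ioc 0 z, ∫ s in Ioc 0 z, f t s :=
        setIntegral_congr_fun measurableSet_Ioc step1
    _ = ∫ s in Ioc 0 z, ∫ t in Ioc 0 z, f t s := integral_integral_swap hint
    _ = ∫ s in Ioc 0 z, (Real.exp z - Real.exp s) * w s :=
        setIntegral_congr_fun measurableSet_Ioc step2

private lemma integrableOn_of_bdd {h : ℝ → ℝ} (hm : Measurable h) {C a b : ℝ}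
    (hb : ∀ s ∈ Ioc a b, |h s| ≤ C) : IntegrableOn h (Ioc a b) volume := by
  refine (integrable_const C).mono' hm.aestronglyMeasurable ?_
  exact (ae_restrict_iff' measurableSet_Ioc).2 (ae_of_all _ hb)

theorem kolmogorov_bound_equilibrium_coupling
    {Ω : Type*} [MeasurableSpace Ω] (μ : Measure Ω) [IsProbabilityMeasure μ]
    (W We : Ω → ℝ) (hWmeas : Measurable W) (hWemeas : Measurable We)
    (hWnonneg : ∀ ω, 0 ≤ W ω) (hWint : Integrable W μ)
    (hEW : ∫ ω, W ω ∂μ = 1)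
    (hWe : IsEquilibrium μ W We)
    (β : ℝ) (hβ : 0 < β) :
    dK (Measure.map W μ) (expMeasure 1)
      ≤ 12 * β + 2 * (μ {ω | β < |We ω - W ω|}).toReal := by
  set p := (μ {ω | β < |We ω - W ω|}).toReal with hpdef
  have hp0 : 0 ≤ p := ENNReal.toReal_nonneg
  set F : ℝ → ℝ := fun z => (μ {ω | W ω ≤ z}).toReal with hFdef
  set Fe : ℝ → ℝ := fun z => (μ {ω | We ω ≤ z}).toReal with hFedef
  set g : ℝ → ℝ := fun x => (μ {ω | x < W ω}).toReal with hgdef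
  -- basic helpers
  have hmono : ∀ {A B : Set Ω}, A ⊆ B → (μ A).toReal ≤ (μ B).toReal := fun h =>
    ENNReal.toReal_mono (measure_ne_top μ _) (measure_mono h)
  have hle1 : ∀ A : Set Ω, (μ A).toReal ≤ 1 := by
    intro A
    have := hmono (subset_univ A)
    simpa using this
  have hsub : ∀ {A B C' : Set Ω}, A ⊆ B ∪ C' →
      (μ A).toReal ≤ (μ B).toReal + (μ C').toReal := by
    intro A B C' h
    have h1 : μ A ≤ μ B + μ C' := (measure_mono h).trans (measure_union_le _ _)
    have h2 := ENNReal.toReal_mono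
      (ENNReal.add_ne_top.2 ⟨measure_ne_top μ _, measure_ne_top μ _⟩) h1
    rwa [ENNReal.toReal_add (measure_ne_top μ _) (measure_ne_top μ _)] at h2
  have hFmono : Monotone F := fun a b hab => hmono (fun ω h => le_trans h hab)
  have hFmeas : Measurable F := hFmono.measurable
  have hF0 : ∀ z, 0 ≤ F z := fun z => ENNReal.toReal_nonneg
  have hF1 : ∀ z, F z ≤ 1 := fun z => hle1 _
  have hFneg : ∀ z < (0:ℝ), F z = 0 := by
    intro z hz
    have : {ω | W ω ≤ z} = (∅ : Set Ω) := by
      ext ω; simp only [mem_setOf_eq, mem_empty_iff_false, iff_false, not_le]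
      exact lt_of_lt_of_le hz (hWnonneg ω)
    simp [hFdef, this]
  have hgF : ∀ x, g x = 1 - F x := by
    intro x
    have hc : {ω | x < W ω} = {ω | W ω ≤ x}ᶜ := by
      ext ω; simp [not_le]
    have hms : MeasurableSet {ω | W ω ≤ x} := hWmeas measurableSet_Iic
    simp only [hgdef, hFdef, hc, prob_compl_eq_one_sub hms]
    rw [ENNReal.toReal_sub_of_le prob_le_one ENNReal.one_ne_top, ENNReal.toReal_one]
  have hg0 : ∀ x, 0 ≤ g x := fun x => ENNReal.toReal_nonneg
  have hg1 : ∀ x, g x ≤ 1 := fun x => hle1 _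
  have hgmeas : Measurable g := by
    have : g = fun x => 1 - F x := funext hgF
    rw [this]; exact measurable_const.sub hFmeas
  -- the equilibrium density
  have hWtail_meas : Measurable (fun x : ℝ => μ {ω | x < W ω}) :=
    Antitone.measurable fun a b hab => measure_mono fun ω h => lt_of_le_of_lt hab h
  set D : ℝ → ℝ≥0∞ := fun x => if 0 ≤ x then μ {ω | x < W ω} else 0 with hDdef
  have hDmeas : Measurable D := by
    refine Measurable.ite ?_ ?_ measurable_const
    · exact measurableSet_Ici
    · exact hWtail_meas
  have hmapWe : Measure.map We μ = volume.withDensity D := by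
    rw [hWe, hEW]
    simp [hDdef, ENNReal.ofReal_one]
  have hFe_eq : ∀ z, Fe z = ((volume.withDensity D) (Iic z)).toReal := by
    intro z
    rw [← hmapWe, Measure.map_apply hWemeas measurableSet_Iic]
    rfl
  have hIic0 : ∫⁻ x in Iic (0:ℝ), D x = 0 := by
    rw [Measure.restrict_congr_set Iio_ae_eq_Iic.symm,
      setLIntegral_congr_fun measurableSet_Iio
        (fun x (hx : x < 0) => if_neg (not_le.2 hx))]
    simp
  have hFe0 : ∀ z ≤ (0:ℝ), Fe z = 0 := by
    intro z hz
    rw [hFe_eq, withDensity_apply _ measurableSet_Iic]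
    have : ∫⁻ x in Iic z, D x ≤ ∫⁻ x in Iic (0:ℝ), D x :=
      lintegral_mono_set (Iic_subset_Iic.2 hz)
    rw [hIic0] at this
    simp [le_antisymm this zero_le]
  have hFeInt : ∀ z, 0 ≤ z → Fe z = ∫ x in Ioc 0 z, g x := by
    intro z hz
    have hdisj : Disjoint (Iic (0:ℝ)) (Ioc 0 z) :=
      Set.disjoint_left.2 fun x hx hx' => absurd hx'.1 (not_lt.2 hx)
    have hsplit : ∫⁻ x in Iic z, D x = ∫⁻ x in Ioc 0 z, D x := by
      rw [← Iic_union_Ioc_eq_Iic hz, lintegral_union measurableSet_Ioc hdisj, hIic0, zero_add]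
    rw [hFe_eq, withDensity_apply _ measurableSet_Iic, hsplit,
      setLIntegral_congr_fun measurableSet_Ioc
        (fun x (hx : x ∈ Ioc (0:ℝ) z) => if_pos hx.1.le)]
    exact (integral_toReal hWtail_meas.aemeasurable
      (ae_of_all _ fun x => measure_lt_top μ _)).symm
  have hFe_nonneg : ∀ z, 0 ≤ Fe z := fun z => ENNReal.toReal_nonneg
  have hFe_le1 : ∀ z, Fe z ≤ 1 := fun z => hle1 _
  have hgint : ∀ a b : ℝ, IntegrableOn g (Ioc a b) volume :=
    fun a b => integrableOn_of_bdd hgmeas (C := 1)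
      (fun s _ => abs_le.2 ⟨by linarith [hg0 s], hg1 s⟩)
  have hFeLip : ∀ a b : ℝ, 0 ≤ a → a ≤ b → Fe b ≤ Fe a + (b - a) := by
    intro a b ha hab
    rw [hFeInt a ha, hFeInt b (ha.trans hab), ← Ioc_union_Ioc_eq_Ioc ha hab,
      setIntegral_union (Set.disjoint_left.2 fun x hx hx' => absurd hx'.1 (not_lt.2 hx.2))
        measurableSet_Ioc (hgint 0 a) (hgint a b)]
    have : ∫ x in Ioc a b, g x ≤ ∫ x in Ioc a b, (1:ℝ) := by
      refine setIntegral_mono_on (hgint a b) (integrableOn_const ?_)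
        measurableSet_Ioc (fun x _ => hg1 x)
      simp [Real.volume_Ioc]
    have h2 : ∫ x in Ioc a b, (1:ℝ) = b - a := by
      simp [Real.volume_Ioc, ENNReal.toReal_ofReal (sub_nonneg.2 hab), hab]
    linarith
  have hFe_le_id : ∀ b : ℝ, 0 ≤ b → Fe b ≤ b := by
    intro b hb
    have := hFeLip 0 b le_rfl hb
    rw [hFe0 0 le_rfl] at this
    linarith
  -- coupling bound
  have hv : ∀ t, 0 ≤ t → |F t - Fe t| ≤ β + p := by
    intro t ht
    have hupper : F t ≤ Fe t + β + p := by
      have h1 : F t ≤ Fe (t + β) + p := by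
        refine hsub fun ω hω => ?_
        by_cases hb : β < |We ω - W ω|
        · exact Or.inr hb
        · left
          push_neg at hb
          have := abs_le.1 hb
          simp only [mem_setOf_eq] at hω ⊢
          linarith [this.2]
      have h2 : Fe (t + β) ≤ Fe t + β := by
        have := hFeLip t (t + β) ht (by linarith)
        linarith
      linarith
    have hlower : Fe t ≤ F t + β + p := by
      by_cases htβ : β ≤ t
      · have h1 : Fe t ≤ Fe (t - β) + β := by
          have := hFeLip (t - β) t (by linarith) (by linarith)
          linarith
        have h2 : Fe (t - β) ≤ F t + p := by
          refine hsub fun ω hω => ?_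
          by_cases hb : β < |We ω - W ω|
          · exact Or.inr hb
          · left
            push_neg at hb
            have := abs_le.1 hb
            simp only [mem_setOf_eq] at hω ⊢
            linarith [this.1]
        linarith
      · push_neg at htβ
        have := hFe_le_id t ht
        linarith [hF0 t]
    rw [abs_le]
    constructor <;> linarith
  -- the exponential CDF
  have hE : ∀ z, ((expMeasure 1) (Iic z)).toReal
      = if 0 ≤ z then 1 - Real.exp (-z) else 0 := by
    intro z
    have h1 : (expMeasure 1) (Iic z) = ∫⁻ x in Iic z, exponentialPDF 1 x := by
      rw [expMeasure, gammaMeasure, withDensity_apply _ measurableSet_Iic]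
      rfl
    rw [h1, lintegral_exponentialPDF_eq_antiDeriv one_pos z]
    split_ifs with h
    · rw [ENNReal.toReal_ofReal (by simp; positivity)]
      · simp
    · simp
  -- the deficit functions
  set w : ℝ → ℝ := fun s => F s - (1 - Real.exp (-s)) with hwdef
  have hwmeas : Measurable w :=
    hFmeas.sub (measurable_const.sub (Real.continuous_exp.comp continuous_neg).measurable)
  have hexp_le_one : ∀ s : ℝ, 0 ≤ s → Real.exp (-s) ≤ 1 := fun s hs =>
    Real.exp_le_one_iff.2 (by linarith)
  have hwbd : ∀ s : ℝ, 0 ≤ s → |w s| ≤ 2 := by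
    intro s hs
    have h1 := hexp_le_one s hs
    have h2 := (Real.exp_pos (-s)).le
    rw [abs_le]
    constructor
    · simp only [hwdef]; linarith [hF0 s]
    · simp only [hwdef]; linarith [hF1 s]
  set u : ℝ → ℝ := fun t => (1 - Real.exp (-t)) - Fe t with hudef
  have hFemono : Monotone Fe := fun a b hab => hmono (fun ω h => le_trans h hab)
  have hFemeas : Measurable Fe := hFemono.measurable
  have humeas : Measurable u :=
    (measurable_const.sub (Real.continuous_exp.comp continuous_neg).measurable).sub hFemeas
  have hubd : ∀ t : ℝ, 0 ≤ t → |u t| ≤ 1 := by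
    intro t ht
    have h1 := hexp_le_one t ht
    have h2 := (Real.exp_pos (-t)).le
    rw [abs_le]
    constructor
    · simp only [hudef]; linarith [hFe_le1 t]
    · simp only [hudef]; linarith [hFe_nonneg t]
  have hexp_eval : ∀ t : ℝ, 0 ≤ t → ∫ s in Ioc (0:ℝ) t, Real.exp (-s) = 1 - Real.exp (-t) := by
    intro t ht
    rw [← intervalIntegral.integral_of_le ht,
      intervalIntegral.integral_comp_neg (fun s => Real.exp s)]
    simp [integral_exp, Real.exp_zero]
  have hexpint : ∀ t : ℝ, IntegrableOn (fun s => Real.exp (-s)) (Ioc 0 t) volume := by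
    intro t
    refine integrableOn_of_bdd (h := fun s => Real.exp (-s)) (by fun_prop)
      (C := 1) fun s hs => ?_
    rw [abs_of_pos (Real.exp_pos _)]
    exact hexp_le_one s hs.1.le
  have hu_int : ∀ t : ℝ, 0 ≤ t → ∫ s in Ioc 0 t, w s = u t := by
    intro t ht
    calc ∫ s in Ioc 0 t, w s = ∫ s in Ioc 0 t, (Real.exp (-s) - g s) := by
          refine setIntegral_congr_fun measurableSet_Ioc fun s _ => ?_
          simp only [hwdef]; rw [hgF]; ring
      _ = (∫ s in Ioc 0 t, Real.exp (-s)) - ∫ s in Ioc 0 t, g s :=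
          integral_sub (hexpint t) (hgint 0 t)
      _ = u t := by rw [hexp_eval t ht, ← hFeInt t ht]
  -- Gronwall-type bound via Fubini
  have key : ∀ z : ℝ, 0 ≤ z → |u z| ≤ β + p := by
    intro z hz
    have hfub := fubini_aux' hwmeas (C := 2) (by norm_num) (z := z) (fun s hs => hwbd s hs.1.le)
    have hL : ∫ t in Ioc (0:ℝ) z, Real.exp t * ∫ s in Ioc 0 t, w s
        = ∫ t in Ioc 0 z, Real.exp t * u t :=
      setIntegral_congr_fun measurableSet_Ioc fun t ht => by rw [hu_int t ht.1.le]
    have hintw : IntegrableOn w (Ioc 0 z) volume :=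
      integrableOn_of_bdd hwmeas fun s hs => hwbd s hs.1.le
    have hint1 : IntegrableOn (fun s => Real.exp s * w s) (Ioc 0 z) volume := by
      refine integrableOn_of_bdd (Real.measurable_exp.mul hwmeas)
        (C := Real.exp z * 2) fun s hs => ?_
      rw [Pi.mul_apply, abs_mul, Real.abs_exp]
      exact mul_le_mul (Real.exp_le_exp.2 hs.2) (hwbd s hs.1.le) (abs_nonneg _)
        (Real.exp_pos _).le
    have hintu : IntegrableOn (fun t => Real.exp t * u t) (Ioc 0 z) volume := by
      refine integrableOn_of_bdd (Real.measurable_exp.mul humeas)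
        (C := Real.exp z * 1) fun s hs => ?_
      rw [Pi.mul_apply, abs_mul, Real.abs_exp]
      exact mul_le_mul (Real.exp_le_exp.2 hs.2) (hubd s hs.1.le) (abs_nonneg _)
        (Real.exp_pos _).le
    have hR : ∫ s in Ioc (0:ℝ) z, (Real.exp z - Real.exp s) * w s
        = Real.exp z * u z - ∫ s in Ioc 0 z, Real.exp s * w s := by
      simp_rw [sub_mul]
      rw [integral_sub (hintw.const_mul (Real.exp z)) hint1, integral_const_mul,
        hu_int z hz]
    rw [hL, hR] at hfub
    have hsum : Real.exp z * u z = ∫ t in Ioc 0 z, (Real.exp t * u t + Real.exp t * w t) := by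
      rw [integral_add hintu hint1]
      linarith
    have hptw : ∀ t, Real.exp t * u t + Real.exp t * w t = Real.exp t * (F t - Fe t) := by
      intro t; simp only [hudef, hwdef]; ring
    rw [setIntegral_congr_fun measurableSet_Ioc (fun t _ => hptw t)] at hsum
    have hintFv : IntegrableOn (fun t => Real.exp t * (F t - Fe t)) (Ioc 0 z) volume := by
      refine integrableOn_of_bdd (Real.measurable_exp.mul (hFmeas.sub hFemeas))
        (C := Real.exp z * (β + p)) fun s hs => ?_
      rw [Pi.mul_apply, abs_mul, Real.abs_exp]
      exact mul_le_mul (Real.exp_le_exp.2 hs.2) (hv s hs.1.le) (abs_nonneg _)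
        (Real.exp_pos _).le
    have hintc : IntegrableOn (fun t : ℝ => Real.exp t * (β + p)) (Ioc 0 z) volume := by
      refine integrableOn_of_bdd (Real.measurable_exp.mul measurable_const)
        (C := Real.exp z * (β + p)) fun s hs => ?_
      simp only [Pi.mul_apply]
      rw [abs_mul, Real.abs_exp, abs_of_nonneg (by linarith : (0:ℝ) ≤ β + p)]
      exact mul_le_mul_of_nonneg_right (Real.exp_le_exp.2 hs.2) (by linarith)
    have hb1 : |Real.exp z * u z| ≤ ∫ t in Ioc 0 z, Real.exp t * (β + p) := by
      rw [hsum]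
      calc |∫ t in Ioc 0 z, Real.exp t * (F t - Fe t)|
          ≤ ∫ t in Ioc 0 z, |Real.exp t * (F t - Fe t)| :=
            norm_integral_le_integral_norm fun t => Real.exp t * (F t - Fe t)
        _ ≤ ∫ t in Ioc 0 z, Real.exp t * (β + p) := by
            refine setIntegral_mono_on hintFv.abs hintc measurableSet_Ioc fun t ht => ?_
            rw [abs_mul, Real.abs_exp]
            exact mul_le_mul_of_nonneg_left (hv t ht.1.le) (Real.exp_pos _).le
    have hb2 : ∫ t in Ioc (0:ℝ) z, Real.exp t * (β + p) = (Real.exp z - 1) * (β + p) := by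
      rw [integral_mul_const, ← intervalIntegral.integral_of_le hz, integral_exp,
        Real.exp_zero]
    rw [hb2, abs_mul, Real.abs_exp] at hb1
    have hez := Real.exp_pos z
    nlinarith [abs_nonneg (u z)]
  -- conclusion
  have hmapW : ∀ z : ℝ, ((Measure.map W μ) (Iic z)).toReal = F z := by
    intro z
    rw [Measure.map_apply hWmeas measurableSet_Iic]
    rfl
  have hfinal : ∀ z : ℝ, |F z - ((expMeasure 1) (Iic z)).toReal| ≤ 12 * β + 2 * p := by
    intro z
    rw [hE]
    split_ifs with h
    · have h1 := hv z h
      have h2 := key z h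
      have h3 : F z - (1 - Real.exp (-z)) = (F z - Fe z) - u z := by
        simp only [hudef]; ring
      rw [h3]
      calc |(F z - Fe z) - u z| ≤ |F z - Fe z| + |u z| := abs_sub _ _
        _ ≤ 12 * β + 2 * p := by linarith
    · push_neg at h
      rw [hFneg z h]
      simp only [sub_zero, abs_zero]
      positivity
  show (⨆ z : ℝ, |((Measure.map W μ) (Iic z)).toReal - ((expMeasure 1) (Iic z)).toReal|)
      ≤ 12 * β + 2 * p
  refine ciSup_le fun z => ?_
  rw [hmapW z]
  exact hfinal z

end
end

section
/- Let W be a non-negative random variable with E W = 1 and let W^e be a random variable having the equilibrium distribution with respect to W, defined on the same probability space. Then for every β > 0, d_K(L(W^e), Exp(1)) ≤ β + P[|W^e − W| > β]. -/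
open MeasureTheory ProbabilityTheory Set

noncomputable section

/-- The Wasserstein distance between two measures on `ℝ`: the supremum of
`|∫ h dP - ∫ h dQ|` over all `1`-Lipschitz functions `h : ℝ → ℝ`. -/
def dW (P Q : Measure ℝ) : ℝ :=
  ⨆ h : {h : ℝ → ℝ // LipschitzWith 1 h}, |∫ x, h.1 x ∂P - ∫ x, h.1 x ∂Q|

lemma gronwall_max {v w : ℝ → ℝ} {c : ℝ} (hc : 0 < c) (hv0 : v 0 = 0)
    (hlip : ∀ x y : ℝ, |v x - v y| ≤ 2 * |x - y|)
    (hint : ∀ a b : ℝ, IntervalIntegrable w volume a b)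
    (hftc : ∀ a b : ℝ, 0 ≤ a → a ≤ b → v b - v a = ∫ x in a..b, w x)
    (hwb : ∀ x : ℝ, 0 ≤ x → w x ≤ c - v x) :
    ∀ z : ℝ, 0 ≤ z → v z ≤ c := by
  intro z hz
  by_contra hcon
  push_neg at hcon
  have hvcont : Continuous v := by
    refine (LipschitzWith.of_dist_le_mul (K := 2) (f := v) ?_).continuous
    intro x y
    rw [Real.dist_eq, Real.dist_eq]
    exact_mod_cast hlip x y
  obtain ⟨m, hmmem, hmax⟩ :=
    isCompact_Icc.exists_isMaxOn (nonempty_Icc.2 hz) (hvcont.continuousOn (s := Icc 0 z))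
  have hzmem : z ∈ Icc 0 z := ⟨hz, le_rfl⟩
  have hvm : c < v m := lt_of_lt_of_le hcon (hmax hzmem)
  have hmpos : 0 < m := by
    rcases lt_or_eq_of_le hmmem.1 with h | h
    · exact h
    · exfalso; rw [← h, hv0] at hvm; linarith
  have key : ∀ δ : ℝ, 0 < δ → δ ≤ m → v m ≤ c + 2 * δ := by
    intro δ hδ hδm
    have hmem' : m - δ ∈ Icc 0 z := ⟨by linarith, by linarith [hmmem.2]⟩
    have h1 : 0 ≤ v m - v (m - δ) := by
      have := hmax hmem'; simpa [sub_nonneg] using this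
    have h2 : v m - v (m - δ) = ∫ x in (m - δ)..m, w x :=
      hftc _ _ (by linarith) (by linarith)
    have h3 : ∫ x in (m - δ)..m, w x ≤ ∫ x in (m - δ)..m, (c - v m + 2 * δ) := by
      apply intervalIntegral.integral_mono_on (by linarith) (hint _ _)
        (intervalIntegrable_const)
      intro x hx
      have hx0 : 0 ≤ x := le_trans (by linarith) hx.1
      have habs : |x - m| ≤ δ := by
        rw [abs_le]; constructor <;> [linarith [hx.1]; linarith [hx.2]]
      have hvv : v m - v x ≤ 2 * δ := by
        have := (abs_le.1 (hlip x m)).1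
        nlinarith [abs_nonneg (x - m)]
      have := hwb x hx0
      linarith
    rw [intervalIntegral.integral_const] at h3
    have : 0 ≤ δ * (c - v m + 2 * δ) := by
      rw [h2] at h1
      calc (0:ℝ) ≤ ∫ x in (m - δ)..m, w x := h1
        _ ≤ _ := by simpa using h3
    nlinarith
  have : v m ≤ c := by
    refine le_of_forall_pos_le_add fun ε hε => ?_
    have hδ : 0 < min m (ε / 2) := lt_min hmpos (by linarith)
    have h1 := key _ hδ (min_le_left _ _)
    have h2 := min_le_right m (ε / 2)
    linarith
  linarith

theorem kolmogorov_bound_equilibrium_law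
    {Ω : Type*} [MeasurableSpace Ω] (μ : Measure Ω) [IsProbabilityMeasure μ]
    (W We : Ω → ℝ) (hWmeas : Measurable W) (hWemeas : Measurable We)
    (hWnonneg : ∀ ω, 0 ≤ W ω) (hWint : Integrable W μ)
    (hEW : ∫ ω, W ω ∂μ = 1)
    (hWe : IsEquilibrium μ W We)
    (β : ℝ) (hβ : 0 < β) :
    dK (Measure.map We μ) (expMeasure 1)
      ≤ β + (μ {ω | β < |We ω - W ω|}).toReal := by
  have hν : Measure.map We μ = volume.withDensity (fun x =>
      if 0 ≤ x then μ {ω | x < W ω} else 0) := by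
    rw [hWe]
    congr 1
    funext x
    rw [hEW, ENNReal.ofReal_one]
    simp
  set ν := Measure.map We μ with hνdef
  set p : ℝ := (μ {ω | β < |We ω - W ω|}).toReal with hpdef
  have hp0 : 0 ≤ p := ENNReal.toReal_nonneg
  set c : ℝ := β + p with hcdef
  have hc : 0 < c := by linarith
  set g : ℝ → ℝ := fun x => (μ {ω | x < W ω}).toReal with hgdef
  set F : ℝ → ℝ := fun z => (ν (Iic z)).toReal with hFdef
  set H : ℝ → ℝ := fun x => (μ {ω | W ω ≤ x}).toReal with hHdef
  set G : ℝ → ℝ := fun z => if 0 ≤ z then 1 - Real.exp (-z) else 0 with hGdef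
  -- basic facts about g
  have hg_anti : Antitone g := by
    intro x y hxy
    exact ENNReal.toReal_le_toReal (measure_ne_top _ _) (measure_ne_top _ _)
      |>.2 (measure_mono fun ω (h : y < W ω) => lt_of_le_of_lt hxy h)
  have hg0 : ∀ x, 0 ≤ g x := fun x => ENNReal.toReal_nonneg
  have hg1 : ∀ x, g x ≤ 1 := fun x => by
    simpa using ENNReal.toReal_le_toReal (measure_ne_top _ _) (by simp) |>.2
      (prob_le_one (μ := μ) (s := {ω | x < W ω}))
  -- ν of Ioc intervals
  have hIoc : ∀ a b : ℝ, 0 ≤ a → a ≤ b →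
      (ν (Ioc a b)).toReal = ∫ x in a..b, g x := by
    intro a b ha hab
    rw [hν, withDensity_apply _ measurableSet_Ioc]
    have h1 : ∫⁻ x in Ioc a b, (if 0 ≤ x then μ {ω | x < W ω} else 0)
        = ∫⁻ x in Ioc a b, ENNReal.ofReal (g x) := by
      refine setLIntegral_congr_fun measurableSet_Ioc (fun x hx => ?_)
      rw [if_pos (le_trans ha hx.1.le), hgdef]
      exact (ENNReal.ofReal_toReal (measure_ne_top _ _)).symm
    rw [h1, intervalIntegral.integral_of_le hab,
      ← integral_eq_lintegral_of_nonneg_ae (ae_of_all _ hg0)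
        (hg_anti.measurable.aestronglyMeasurable)]
  have hIoc_le : ∀ a b : ℝ, a ≤ b → ν (Ioc a b) ≤ ENNReal.ofReal (b - a) := by
    intro a b hab
    rw [hν, withDensity_apply _ measurableSet_Ioc]
    calc ∫⁻ x in Ioc a b, (if 0 ≤ x then μ {ω | x < W ω} else 0)
        ≤ ∫⁻ _x in Ioc a b, 1 := by
          refine lintegral_mono fun x => ?_
          split_ifs
          · exact prob_le_one
          · exact zero_le_one
      _ = ENNReal.ofReal (b - a) := by
          rw [setLIntegral_one, Real.volume_Ioc]
  -- splitting Iic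
  have hsplit : ∀ a b : ℝ, a ≤ b → ν (Iic b) = ν (Iic a) + ν (Ioc a b) := by
    intro a b hab
    rw [← Iic_union_Ioc_eq_Iic hab,
      measure_union (Iic_disjoint_Ioc le_rfl) measurableSet_Ioc]
  have hFdiff : ∀ a b : ℝ, a ≤ b → F b - F a = (ν (Ioc a b)).toReal := by
    intro a b hab
    rw [hFdef]
    simp only
    rw [hsplit a b hab, ENNReal.toReal_add (measure_ne_top _ _) (measure_ne_top _ _)]
    ring
  have hF_lip : ∀ a b : ℝ, a ≤ b → 0 ≤ F b - F a ∧ F b - F a ≤ b - a := by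
    intro a b hab
    rw [hFdiff a b hab]
    refine ⟨ENNReal.toReal_nonneg, ?_⟩
    have := hIoc_le a b hab
    calc (ν (Ioc a b)).toReal ≤ (ENNReal.ofReal (b - a)).toReal :=
          ENNReal.toReal_le_toReal (measure_ne_top _ _) ENNReal.ofReal_ne_top |>.2 this
      _ = b - a := ENNReal.toReal_ofReal (by linarith)
  have hF_lip2 : ∀ x y : ℝ, |F x - F y| ≤ |x - y| := by
    intro x y
    rcases le_total x y with h | h
    · rw [abs_sub_comm, abs_sub_comm x y, abs_of_nonneg (by linarith [(hF_lip x y h).1]),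
        abs_of_nonneg (by linarith)]
      exact (hF_lip x y h).2
    · rw [abs_of_nonneg (by linarith [(hF_lip y x h).1]), abs_of_nonneg (by linarith)]
      exact (hF_lip y x h).2
  -- F via preimages
  have hF_pre : ∀ z : ℝ, F z = (μ {ω | We ω ≤ z}).toReal := by
    intro z
    rw [hFdef]
    simp only
    rw [hνdef, Measure.map_apply hWemeas measurableSet_Iic]
    rfl
  have hF_neg : ∀ z : ℝ, z < 0 → F z = 0 := by
    intro z hz
    rw [hFdef]
    simp only
    rw [hν, withDensity_apply _ measurableSet_Iic]
    have : ∫⁻ x in Iic z, (if 0 ≤ x then μ {ω | x < W ω} else 0) = ∫⁻ _x in Iic z, 0 := by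
      refine setLIntegral_congr_fun measurableSet_Iic (fun x hx => ?_)
      rw [if_neg (by exact not_le.2 (lt_of_le_of_lt hx hz))]
    rw [this, lintegral_zero]
    simp
  -- g + H = 1
  have hgH : ∀ x : ℝ, g x + H x = 1 := by
    intro x
    have hmeas : MeasurableSet {ω | W ω ≤ x} := hWmeas measurableSet_Iic
    have hcompl : {ω | x < W ω} = {ω | W ω ≤ x}ᶜ := by
      ext ω; simp [not_le]
    have := measure_add_measure_compl (μ := μ) hmeas
    rw [hgdef, hHdef]
    simp only
    rw [hcompl]
    have h2 : (μ {ω | W ω ≤ x}ᶜ).toReal + (μ {ω | W ω ≤ x}).toReal = 1 := by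
      rw [← ENNReal.toReal_add (measure_ne_top _ _) (measure_ne_top _ _), add_comm, this]
      simp
    linarith
  -- coupling inequalities
  have hcoup1 : ∀ x : ℝ, F (x - β) ≤ H x + p := by
    intro x
    rw [hF_pre]
    have hsub : {ω | We ω ≤ x - β} ⊆ {ω | W ω ≤ x} ∪ {ω | β < |We ω - W ω|} := by
      intro ω hω
      simp only [mem_setOf_eq, mem_union]
      by_cases h : β < |We ω - W ω|
      · exact Or.inr h
      · push_neg at h
        left
        have := abs_le.1 h
        simp only [mem_setOf_eq] at hω
        linarith [this.1]
    calc (μ {ω | We ω ≤ x - β}).toReal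
        ≤ (μ {ω | W ω ≤ x} + μ {ω | β < |We ω - W ω|}).toReal := by
          refine ENNReal.toReal_le_toReal (measure_ne_top _ _)
            (by exact ENNReal.add_ne_top.2 ⟨measure_ne_top _ _, measure_ne_top _ _⟩) |>.2 ?_
          exact le_trans (measure_mono hsub) (measure_union_le _ _)
      _ = H x + p := by
          rw [ENNReal.toReal_add (measure_ne_top _ _) (measure_ne_top _ _)]
  have hcoup2 : ∀ x : ℝ, H x ≤ F (x + β) + p := by
    intro x
    rw [hF_pre]
    have hsub : {ω | W ω ≤ x} ⊆ {ω | We ω ≤ x + β} ∪ {ω | β < |We ω - W ω|} := by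
      intro ω hω
      simp only [mem_setOf_eq, mem_union]
      by_cases h : β < |We ω - W ω|
      · exact Or.inr h
      · push_neg at h
        left
        have := abs_le.1 h
        simp only [mem_setOf_eq] at hω
        linarith [this.2]
    calc (μ {ω | W ω ≤ x}).toReal
        ≤ (μ {ω | We ω ≤ x + β} + μ {ω | β < |We ω - W ω|}).toReal := by
          refine ENNReal.toReal_le_toReal (measure_ne_top _ _)
            (by exact ENNReal.add_ne_top.2 ⟨measure_ne_top _ _, measure_ne_top _ _⟩) |>.2 ?_
          exact le_trans (measure_mono hsub) (measure_union_le _ _)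
      _ = (μ {ω | We ω ≤ x + β}).toReal + p := by
          rw [ENNReal.toReal_add (measure_ne_top _ _) (measure_ne_top _ _)]
  -- pointwise bounds
  have hbound1 : ∀ x : ℝ, F x - H x ≤ c := by
    intro x
    have h1 := (hF_lip (x - β) x (by linarith)).2
    have h2 := hcoup1 x
    rw [hcdef]; linarith
  have hbound2 : ∀ x : ℝ, H x - F x ≤ c := by
    intro x
    have h1 := (hF_lip x (x + β) (by linarith)).2
    have h2 := hcoup2 x
    rw [hcdef]; linarith
  -- facts about G
  have hG_exp : ∀ z : ℝ, ((expMeasure 1) (Iic z)).toReal = G z := by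
    intro z
    have : IsProbabilityMeasure (expMeasure 1) := isProbabilityMeasure_expMeasure one_pos
    have h := cdf_expMeasure_eq one_pos z
    rw [cdf_eq_real, measureReal_def] at h
    rw [h, hGdef]
    simp
  have hG_ftc : ∀ a b : ℝ, 0 ≤ a → a ≤ b → G b - G a = ∫ x in a..b, Real.exp (-x) := by
    intro a b ha hab
    rw [intervalIntegral.integral_comp_neg (fun x => Real.exp x), integral_exp, hGdef]
    simp only
    rw [if_pos (le_trans ha hab), if_pos ha]
    ring
  have hG_lip : ∀ a b : ℝ, a ≤ b → 0 ≤ G b - G a ∧ G b - G a ≤ b - a := by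
    intro a b hab
    rw [hGdef]
    simp only
    split_ifs with h1 h2 h2
    · constructor
      · have : Real.exp (-b) ≤ Real.exp (-a) := Real.exp_le_exp.2 (by linarith)
        linarith
      · have e1 : 1 - (b - a) ≤ Real.exp (-(b - a)) := by
          have := Real.add_one_le_exp (-(b - a)); linarith
        have e3 : Real.exp (-a) - Real.exp (-b) = Real.exp (-a) * (1 - Real.exp (-(b-a))) := by
          rw [mul_sub, mul_one, ← Real.exp_add]; ring_nf
        have e4 : 0 ≤ 1 - Real.exp (-(b-a)) := by
          have : Real.exp (-(b-a)) ≤ 1 := Real.exp_le_one_iff.2 (by linarith)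
          linarith
        have e2 : Real.exp (-a) ≤ 1 := Real.exp_le_one_iff.2 (by linarith)
        nlinarith [Real.exp_pos (-a)]
    · constructor
      · have : Real.exp (-b) ≤ 1 := Real.exp_le_one_iff.2 (by linarith)
        linarith
      · have := Real.add_one_le_exp (-b); push_neg at h2; linarith
    · exact absurd (le_trans h2 hab) h1
    · exact ⟨by norm_num, by push_neg at h1 h2; linarith⟩
  have hG_lip2 : ∀ x y : ℝ, |G x - G y| ≤ |x - y| := by
    intro x y
    rcases le_total x y with h | h
    · rw [abs_sub_comm, abs_sub_comm x y, abs_of_nonneg (by linarith [(hG_lip x y h).1]),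
        abs_of_nonneg (by linarith)]
      exact (hG_lip x y h).2
    · rw [abs_of_nonneg (by linarith [(hG_lip y x h).1]), abs_of_nonneg (by linarith)]
      exact (hG_lip y x h).2
  -- integrability of w
  have hexp_int : ∀ a b : ℝ, IntervalIntegrable (fun x => Real.exp (-x)) volume a b :=
    fun a b => (Real.continuous_exp.comp continuous_neg).intervalIntegrable a b
  have hg_int : ∀ a b : ℝ, IntervalIntegrable g volume a b :=
    fun a b => hg_anti.intervalIntegrable
  -- F vanishes at 0
  have hF0 : F 0 = 0 := by
    rw [hFdef]
    simp only
    rw [hν, withDensity_apply _ measurableSet_Iic]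
    have h0 : ∀ᵐ (x : ℝ) ∂volume, x ≠ 0 := by
      rw [ae_iff]
      have : {x : ℝ | ¬x ≠ 0} = {0} := by ext x; simp
      rw [this, Real.volume_singleton]
    have : ∫⁻ x in Iic (0:ℝ), (if 0 ≤ x then μ {ω | x < W ω} else 0) = ∫⁻ _x in Iic (0:ℝ), 0 := by
      refine setLIntegral_congr_fun_ae measurableSet_Iic ?_
      filter_upwards [h0] with x hx hx2
      have hxle : x ≤ 0 := hx2
      rw [if_neg (fun hle => hx (le_antisymm hxle hle))]
    rw [this, lintegral_zero]
    simp
  have hG0 : G 0 = 0 := by rw [hGdef]; simp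
  -- first application: F - G ≤ c on [0, ∞)
  have happ1 : ∀ z : ℝ, 0 ≤ z → F z - G z ≤ c := by
    refine gronwall_max (w := fun x => g x - Real.exp (-x)) hc (by rw [hF0, hG0]; ring) ?_ ?_ ?_ ?_
    · intro x y
      have h1 := hF_lip2 x y
      have h2 := hG_lip2 x y
      have e : F x - G x - (F y - G y) = (F x - F y) + (-(G x - G y)) := by ring
      rw [e]
      calc |(F x - F y) + (-(G x - G y))| ≤ |F x - F y| + |-(G x - G y)| := abs_add_le _ _
        _ = |F x - F y| + |G x - G y| := by rw [abs_neg]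
        _ ≤ 2 * |x - y| := by linarith
    · exact fun a b => (hg_int a b).sub (hexp_int a b)
    · intro a b ha hab
      rw [intervalIntegral.integral_sub (hg_int a b) (hexp_int a b)]
      have h1 : F b - F a = ∫ x in a..b, g x := by rw [hFdiff a b hab, hIoc a b ha hab]
      have h2 := hG_ftc a b ha hab
      linarith
    · intro x hx
      have h1 := hbound1 x
      have h2 := hgH x
      have h3 : G x = 1 - Real.exp (-x) := by rw [hGdef]; simp only; rw [if_pos hx]
      show g x - Real.exp (-x) ≤ c - (F x - G x)
      linarith
  have happ2 : ∀ z : ℝ, 0 ≤ z → G z - F z ≤ c := by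
    refine gronwall_max (w := fun x => Real.exp (-x) - g x) hc (by rw [hF0, hG0]; ring) ?_ ?_ ?_ ?_
    · intro x y
      have h1 := hF_lip2 x y
      have h2 := hG_lip2 x y
      have e : G x - F x - (G y - F y) = (G x - G y) + (-(F x - F y)) := by ring
      rw [e]
      calc |(G x - G y) + (-(F x - F y))| ≤ |G x - G y| + |-(F x - F y)| := abs_add_le _ _
        _ = |G x - G y| + |F x - F y| := by rw [abs_neg]
        _ ≤ 2 * |x - y| := by linarith
    · exact fun a b => (hexp_int a b).sub (hg_int a b)
    · intro a b ha hab
      rw [intervalIntegral.integral_sub (hexp_int a b) (hg_int a b)]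
      have h1 : F b - F a = ∫ x in a..b, g x := by rw [hFdiff a b hab, hIoc a b ha hab]
      have h2 := hG_ftc a b ha hab
      linarith
    · intro x hx
      have h1 := hbound2 x
      have h2 := hgH x
      have h3 : G x = 1 - Real.exp (-x) := by rw [hGdef]; simp only; rw [if_pos hx]
      show Real.exp (-x) - g x ≤ c - (G x - F x)
      linarith
  -- conclusion
  rw [dK]
  refine ciSup_le fun z => ?_
  rw [hG_exp z]
  show |F z - G z| ≤ β + p
  rcases le_or_gt 0 z with hz | hz
  · rw [abs_le]
    constructor
    · have := happ2 z hz; rw [hcdef] at this; linarith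
    · have := happ1 z hz; rw [hcdef] at this; linarith
  · have h1 : F z = 0 := hF_neg z hz
    have h2 : G z = 0 := by rw [hGdef]; simp only; rw [if_neg (not_le.2 hz)]
    rw [h1, h2]
    simp
    linarith

end
end

section
/- Let W be a non-negative random variable with E W = 1 and E W² < ∞, and let W^e be a random variable having the equilibrium distribution with respect to W, defined on the same probability space. Then d_W(L(W), Exp(1)) ≤ 2·E|W^e − W|. -/
open MeasureTheory ProbabilityTheory Set

noncomputable section

open Real Filter Topology
open scoped NNReal ENNReal

set_option linter.unusedSectionVars false
set_option linter.unusedVariables false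
set_option maxHeartbeats 1000000

namespace WassExpAux

lemma hasDerivAt_anti (x t : ℝ) :
    HasDerivAt (fun t => -(t - x + 1) * Real.exp (-t)) ((t - x) * Real.exp (-t)) t := by
  have h1 : HasDerivAt (fun t : ℝ => -(t - x + 1)) (-1) t := by
    exact (((hasDerivAt_id t).sub_const x).add_const 1).fun_neg
  have h2 : HasDerivAt (fun t : ℝ => Real.exp (-t)) (-Real.exp (-t)) t := by
    simpa using ((hasDerivAt_id t).fun_neg).exp
  exact (h1.fun_mul h2).congr_deriv (by ring)

lemma tendsto_anti (x : ℝ) :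
    Tendsto (fun t => -(t - x + 1) * Real.exp (-t)) atTop (𝓝 0) := by
  have h1 := Real.tendsto_pow_mul_exp_neg_atTop_nhds_zero 1
  have h0 := Real.tendsto_pow_mul_exp_neg_atTop_nhds_zero 0
  have heq : (fun t : ℝ => -(t - x + 1) * Real.exp (-t))
      = fun t => -(t ^ 1 * Real.exp (-t)) + (x - 1) * (t ^ 0 * Real.exp (-t)) := by
    funext t; ring
  rw [heq]
  simpa using h1.neg.add (h0.const_mul (x - 1))

lemma cont_anti (x : ℝ) : Continuous (fun t => -(t - x + 1) * Real.exp (-t)) :=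
  ((continuous_id.sub continuous_const).add continuous_const).neg.mul
    (Real.continuous_exp.comp continuous_neg)

lemma integrableOn_sub_mul_exp (x : ℝ) :
    IntegrableOn (fun t => (t - x) * Real.exp (-t)) (Ioi x) := by
  refine integrableOn_Ioi_deriv_of_nonneg ?_ (fun t _ => hasDerivAt_anti x t)
    (fun t ht => mul_nonneg (sub_nonneg.2 ht.le) (Real.exp_pos _).le) (tendsto_anti x)
  exact (cont_anti x).continuousWithinAt

lemma integral_sub_mul_exp (x : ℝ) :
    ∫ t in Ioi x, (t - x) * Real.exp (-t) = Real.exp (-x) := by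
  rw [integral_Ioi_of_hasDerivAt_of_nonneg (cont_anti x).continuousWithinAt
    (fun t _ => hasDerivAt_anti x t)
    (fun t ht => mul_nonneg (sub_nonneg.2 ht.le) (Real.exp_pos _).le) (tendsto_anti x)]
  simp

lemma hasDerivAt_negexp (t : ℝ) :
    HasDerivAt (fun t : ℝ => -Real.exp (-t)) (Real.exp (-t)) t := by
  have h2 : HasDerivAt (fun t : ℝ => Real.exp (-t)) (-Real.exp (-t)) t := by
    simpa using ((hasDerivAt_id t).fun_neg).exp
  simpa using h2.fun_neg

lemma tendsto_negexp : Tendsto (fun t : ℝ => -Real.exp (-t)) atTop (𝓝 0) := by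
  have h0 := Real.tendsto_pow_mul_exp_neg_atTop_nhds_zero 0
  simp only [pow_zero, one_mul] at h0
  simpa using h0.neg

lemma integrableOn_exp_neg (x : ℝ) : IntegrableOn (fun t => Real.exp (-t)) (Ioi x) := by
  refine integrableOn_Ioi_deriv_of_nonneg ?_ (fun t _ => hasDerivAt_negexp t)
    (fun t _ => (Real.exp_pos _).le) tendsto_negexp
  exact (Real.continuous_exp.comp continuous_neg).neg.continuousWithinAt

lemma integral_Ioi_split {φ : ℝ → ℝ} {a b : ℝ} (hab : a ≤ b) (hφ : IntegrableOn φ (Ioi a)) :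
    ∫ t in Ioi a, φ t = (∫ t in Ioc a b, φ t) + ∫ t in Ioi b, φ t := by
  rw [← Ioc_union_Ioi_eq_Ioi hab,
    setIntegral_union Ioc_disjoint_Ioi_same measurableSet_Ioi
      (hφ.mono_set Ioc_subset_Ioi_self) (hφ.mono_set (Ioi_subset_Ioi hab))]

section Lip

variable {g : ℝ → ℝ}

def phi (g : ℝ → ℝ) (t : ℝ) : ℝ := g t * Real.exp (-t)

def eqF (g : ℝ → ℝ) (x : ℝ) : ℝ := ∫ t in Ioi x, phi g t

def eqf (g : ℝ → ℝ) (x : ℝ) : ℝ := -(Real.exp x * eqF g x)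

def eqpsi (g : ℝ → ℝ) (x : ℝ) : ℝ := eqf g x + g x

lemma cont_phi (hg : LipschitzWith 1 g) : Continuous (phi g) :=
  hg.continuous.mul (Real.continuous_exp.comp continuous_neg)

lemma abs_g_le (hg : LipschitzWith 1 g) (x t : ℝ) : |g t| ≤ |g x| + |t - x| := by
  have := hg.dist_le_mul t x
  rw [Real.dist_eq, Real.dist_eq] at this
  have h2 : |g t| - |g x| ≤ |g t - g x| := abs_sub_abs_le_abs_sub _ _
  simp only [NNReal.coe_one, one_mul] at this
  linarith

lemma integrableOn_phi (hg : LipschitzWith 1 g) (x : ℝ) :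
    IntegrableOn (phi g) (Ioi x) := by
  refine Integrable.mono'
    (((integrableOn_exp_neg x).const_mul |g x|).add (integrableOn_sub_mul_exp x))
    (cont_phi hg).aestronglyMeasurable.restrict ?_
  refine (ae_restrict_iff' measurableSet_Ioi).2 (ae_of_all _ fun t ht => ?_)
  simp only [Pi.add_apply]
  have h1 : |g t| ≤ |g x| + (t - x) := by
    have := abs_g_le hg x t
    rwa [abs_of_nonneg (sub_nonneg.2 ht.le)] at this
  have h2 : ‖phi g t‖ = |g t| * Real.exp (-t) := by
    rw [Real.norm_eq_abs, phi, abs_mul, abs_of_pos (Real.exp_pos _)]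
  rw [h2]
  have := Real.exp_pos (-t)
  nlinarith

lemma eqF_eq (hg : LipschitzWith 1 g) (x : ℝ) :
    eqF g x = eqF g 0 - ∫ t in (0:ℝ)..x, phi g t := by
  rcases le_or_gt 0 x with hx | hx
  · have := integral_Ioi_split hx (integrableOn_phi hg 0)
    rw [intervalIntegral.integral_of_le hx]
    simp only [eqF] at *
    linarith
  · have := integral_Ioi_split hx.le (integrableOn_phi hg x)
    rw [intervalIntegral.integral_of_ge hx.le]
    simp only [eqF] at *
    linarith

lemma hasDerivAt_eqF (hg : LipschitzWith 1 g) (x : ℝ) :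
    HasDerivAt (eqF g) (-(phi g x)) x := by
  have heq : eqF g = fun y => eqF g 0 - ∫ t in (0:ℝ)..y, phi g t := funext (eqF_eq hg)
  rw [heq]
  have hD : HasDerivAt (fun y => ∫ t in (0:ℝ)..y, phi g t) (phi g x) x :=
    intervalIntegral.integral_hasDerivAt_right ((cont_phi hg).intervalIntegrable _ _)
      ((cont_phi hg).stronglyMeasurableAtFilter _ _) (cont_phi hg).continuousAt
  simpa using (hasDerivAt_const x (eqF g 0)).fun_sub hD

lemma exp_mul_phi (x : ℝ) : Real.exp x * (g x * Real.exp (-x)) = g x := by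
  rw [mul_comm (g x), ← mul_assoc, ← Real.exp_add]
  simp

lemma hasDerivAt_eqf (hg : LipschitzWith 1 g) (x : ℝ) :
    HasDerivAt (eqf g) (eqpsi g x) x := by
  have h2 : HasDerivAt (eqf g)
      (-(Real.exp x * eqF g x + Real.exp x * -(phi g x))) x :=
    ((Real.hasDerivAt_exp x).mul (hasDerivAt_eqF hg x)).neg
  convert h2 using 1
  have := exp_mul_phi (g := g) x
  simp only [eqpsi, eqf, phi] at *
  linarith

lemma eqpsi_eq (hg : LipschitzWith 1 g) (x : ℝ) :
    eqpsi g x = Real.exp x * ∫ t in Ioi x, (g x - g t) * Real.exp (-t) := by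
  have h1 : IntegrableOn (fun t => g x * Real.exp (-t)) (Ioi x) :=
    (integrableOn_exp_neg x).const_mul (g x)
  have heq : ∀ t : ℝ, (g x - g t) * Real.exp (-t)
      = g x * Real.exp (-t) - phi g t := by intro t; rw [phi]; ring
  simp_rw [heq]
  rw [integral_sub h1 (integrableOn_phi hg x), integral_const_mul, integral_exp_neg_Ioi]
  have := exp_mul_phi (g := g) x
  simp only [eqpsi, eqf, phi, eqF, mul_sub] at *
  linarith

lemma abs_eqpsi_le (hg : LipschitzWith 1 g) (x : ℝ) : |eqpsi g x| ≤ 1 := by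
  rw [eqpsi_eq hg x, abs_mul, abs_of_pos (Real.exp_pos x)]
  have h1 : |∫ t in Ioi x, (g x - g t) * Real.exp (-t)|
      ≤ ∫ t in Ioi x, (t - x) * Real.exp (-t) := by
    have h2 : |∫ t in Ioi x, (g x - g t) * Real.exp (-t)|
        ≤ ∫ t in Ioi x, |(g x - g t) * Real.exp (-t)| := by
      simpa [Real.norm_eq_abs, abs_mul, abs_of_pos (Real.exp_pos _)] using
        norm_integral_le_integral_norm (μ := volume.restrict (Ioi x))
          (fun t => (g x - g t) * Real.exp (-t))
    refine h2.trans (integral_mono_of_nonneg (ae_of_all _ fun t => abs_nonneg _)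
      (integrableOn_sub_mul_exp x) ?_)
    · refine (ae_restrict_iff' measurableSet_Ioi).2 (ae_of_all _ fun t ht => ?_)
      have hd : |g x - g t| ≤ t - x := by
        have h5 := hg.dist_le_mul x t
        rw [Real.dist_eq, Real.dist_eq, abs_sub_comm x t,
          abs_of_nonneg (show (0:ℝ) ≤ t - x from sub_nonneg.2 (le_of_lt ht))] at h5
        simpa using h5
      simp only [Pi.add_apply]
      rw [abs_mul, abs_of_pos (Real.exp_pos _)]
      exact mul_le_mul_of_nonneg_right hd (Real.exp_pos _).le
  calc Real.exp x * |∫ t in Ioi x, (g x - g t) * Real.exp (-t)|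
      ≤ Real.exp x * Real.exp (-x) :=
        mul_le_mul_of_nonneg_left (h1.trans_eq (integral_sub_mul_exp x)) (Real.exp_pos x).le
    _ = 1 := by rw [← Real.exp_add]; simp

lemma lipschitz_eqf (hg : LipschitzWith 1 g) : LipschitzWith 1 (eqf g) := by
  apply lipschitzWith_of_nnnorm_deriv_le (fun x => (hasDerivAt_eqf hg x).differentiableAt)
  intro x
  rw [(hasDerivAt_eqf hg x).deriv, ← NNReal.coe_le_coe]
  push_cast
  rw [Real.norm_eq_abs]
  exact abs_eqpsi_le hg x

lemma lipschitz_eqpsi (hg : LipschitzWith 1 g) : LipschitzWith 2 (eqpsi g) := by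
  have h := (lipschitz_eqf hg).add hg
  have : (1 + 1 : ℝ≥0) = 2 := by norm_num
  rw [this] at h
  exact h

lemma continuous_eqpsi (hg : LipschitzWith 1 g) : Continuous (eqpsi g) :=
  (lipschitz_eqpsi hg).continuous

lemma abs_eqpsi_sub (hg : LipschitzWith 1 g) (a b : ℝ) :
    |eqpsi g a - eqpsi g b| ≤ 2 * |a - b| := by
  have := (lipschitz_eqpsi hg).dist_le_mul a b
  rw [Real.dist_eq, Real.dist_eq] at this
  simpa using this


end Lip

lemma integral_expMeasure (h : ℝ → ℝ) :
    ∫ x, h x ∂(expMeasure 1) = ∫ t in Ioi 0, h t * Real.exp (-t) := by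
  have hd : gammaPDF 1 1 = fun x =>
      ((Real.toNNReal ((Ici (0:ℝ)).indicator (fun t => Real.exp (-t)) x) : ℝ≥0) : ℝ≥0∞) := by
    funext x
    have hre : gammaPDFReal 1 1 x = (Ici (0:ℝ)).indicator (fun t => Real.exp (-t)) x := by
      rw [gammaPDFReal, Set.indicator_apply]
      simp only [mem_Ici]
      split_ifs with hx
      · norm_num [Real.Gamma_one, Real.rpow_zero, Real.one_rpow]
      · rfl
    rw [gammaPDF, hre]
    rfl
  rw [expMeasure, gammaMeasure, hd,
    integral_withDensity_eq_integral_smul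
      (f := fun x => Real.toNNReal ((Ici (0:ℝ)).indicator (fun t => Real.exp (-t)) x))
      (Measurable.real_toNNReal ((Real.continuous_exp.comp continuous_neg).measurable.indicator measurableSet_Ici)) h]
  have hsm : ∀ x, (Real.toNNReal ((Ici (0:ℝ)).indicator (fun t => Real.exp (-t)) x)) • h x
      = (Ici (0:ℝ)).indicator (fun t => Real.exp (-t) * h t) x := by
    intro x
    rw [Set.indicator_apply, Set.indicator_apply]
    split_ifs with hx
    · rw [NNReal.smul_def, Real.coe_toNNReal _ (Real.exp_pos _).le, smul_eq_mul]
    · simp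
  simp_rw [hsm]
  rw [integral_indicator measurableSet_Ici, integral_Ici_eq_integral_Ioi]
  exact setIntegral_congr_fun measurableSet_Ioi fun t _ => mul_comm _ _


section MeasAux

variable {Ω : Type*} [MeasurableSpace Ω] {μ : Measure Ω} [IsProbabilityMeasure μ]
  {W We : Ω → ℝ}

lemma map_We_eq (hEW : ∫ ω, W ω ∂μ = 1) (hWe : IsEquilibrium μ W We) :
    Measure.map We μ = volume.withDensity (fun x => if 0 ≤ x then μ {ω | x < W ω} else 0) := by
  rw [IsEquilibrium] at hWe
  rw [hWe, hEW]
  congr 1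
  funext x
  simp

lemma rho_meas : Measurable (fun x : ℝ => if 0 ≤ x then μ {ω | x < W ω} else 0) := by
  refine Measurable.ite measurableSet_Ici ?_ measurable_const
  exact Antitone.measurable (fun s t hst => measure_mono (fun ω hω => lt_of_le_of_lt hst hω))

lemma equilibrium_integral (hWmeas : Measurable W) (hWemeas : Measurable We)
    (hWnonneg : ∀ ω, 0 ≤ W ω) (hWint : Integrable W μ) (hEW : ∫ ω, W ω ∂μ = 1)
    (hWe : IsEquilibrium μ W We) {Φ ψ : ℝ → ℝ} (hΦ : ∀ t, HasDerivAt Φ (ψ t) t)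
    (hψc : Continuous ψ) (hψb : ∀ x, |ψ x| ≤ 1) :
    ∫ ω, ψ (We ω) ∂μ = ∫ ω, (Φ (W ω) - Φ 0) ∂μ := by
  set ρ : ℝ → ℝ≥0∞ := fun x => if 0 ≤ x then μ {ω | x < W ω} else 0 with hρ
  have hρfin : ∀ x, ρ x ≠ ∞ := by
    intro x
    rw [hρ]
    dsimp only
    split_ifs
    · exact measure_ne_top μ _
    · exact ENNReal.zero_ne_top
  -- Step 1
  have h1 : ∫ ω, ψ (We ω) ∂μ = ∫ x, ((ρ x).toNNReal : ℝ) • ψ x := by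
    rw [← integral_map hWemeas.aemeasurable hψc.aestronglyMeasurable,
      map_We_eq hEW hWe]
    have hwd : volume.withDensity (fun x => if 0 ≤ x then μ {ω | x < W ω} else 0)
        = volume.withDensity (fun x => ((ρ x).toNNReal : ℝ≥0∞)) := by
      congr 1
      funext x
      rw [ENNReal.coe_toNNReal (hρfin x)]
    rw [hwd, integral_withDensity_eq_integral_smul
      (f := fun x => (ρ x).toNNReal) rho_meas.ennreal_toNNReal ψ]
    simp [NNReal.smul_def]
  -- the kernel
  set K : ℝ → Ω → ℝ := fun x ω => (Ico 0 (W ω)).indicator ψ x with hK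
  set S : Set (ℝ × Ω) := {p : ℝ × Ω | 0 ≤ p.1 ∧ p.1 < W p.2} with hS
  have hSmeas : MeasurableSet S :=
    (measurableSet_le measurable_const measurable_fst).inter
      (measurableSet_lt measurable_fst (hWmeas.comp measurable_snd))
  have hKunc : Function.uncurry K = fun p : ℝ × Ω => S.indicator (fun q => ψ q.1) p := by
    funext p
    simp only [Function.uncurry, hK, Set.indicator_apply, mem_Ico, hS, mem_setOf_eq]
  have hKint : Integrable (Function.uncurry K) (volume.prod μ) := by
    constructor
    · rw [hKunc]
      exact ((hψc.measurable.comp measurable_fst).indicator hSmeas).aestronglyMeasurable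
    · show (∫⁻ p, (‖Function.uncurry K p‖₊ : ℝ≥0∞) ∂(volume.prod μ)) < ⊤
      calc ∫⁻ p, (‖Function.uncurry K p‖₊ : ℝ≥0∞) ∂(volume.prod μ)
          ≤ ∫⁻ p, S.indicator (fun _ => (1:ℝ≥0∞)) p ∂(volume.prod μ) := by
            refine lintegral_mono fun p => ?_
            rw [hKunc]
            by_cases hp : p ∈ S
            · simp only [Set.indicator_of_mem hp]
              have h2 : ‖ψ p.1‖₊ ≤ (1:ℝ≥0) := by
                rw [← NNReal.coe_le_coe]
                push_cast
                rw [Real.norm_eq_abs]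
                exact hψb p.1
              exact_mod_cast h2
            · simp [Set.indicator_of_notMem hp]
        _ = (volume.prod μ) S := by rw [lintegral_indicator hSmeas, setLIntegral_one]
        _ = ∫⁻ ω, volume ((fun x => (x, ω)) ⁻¹' S) ∂μ := Measure.prod_apply_symm hSmeas
        _ = ∫⁻ ω, ENNReal.ofReal (W ω) ∂μ := by
            refine lintegral_congr fun ω => ?_
            have hpre : ((fun x => (x, ω)) ⁻¹' S) = Ico 0 (W ω) := by
              ext x; simp [hS, mem_Ico]
            rw [hpre, Real.volume_Ico, sub_zero]
        _ = ENNReal.ofReal (∫ ω, W ω ∂μ) :=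
            (ofReal_integral_eq_lintegral_ofReal hWint (ae_of_all _ hWnonneg)).symm
        _ < ⊤ := by rw [hEW]; exact ENNReal.ofReal_lt_top
  -- inner identity
  have hinner : ∀ x, ∫ ω, K x ω ∂μ = ((ρ x).toNNReal : ℝ) • ψ x := by
    intro x
    by_cases hx : 0 ≤ x
    · have hKx : (fun ω => K x ω) = fun ω => Set.indicator {ω | x < W ω} (fun _ => ψ x) ω := by
        funext ω
        simp [hK, Set.indicator_apply, mem_Ico, hx, mem_setOf_eq]
      rw [hKx, integral_indicator_const (ψ x) (measurableSet_lt measurable_const hWmeas)]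
      rw [hρ]
      simp only [if_pos hx]
      rfl
    · have hKx : (fun ω => K x ω) = fun _ => (0:ℝ) := by
        funext ω
        simp [hK, Set.indicator_apply, mem_Ico, hx]
      rw [hKx]
      simp [hρ, hx]
  -- outer identity
  have houter : ∀ ω, (∫ x, K x ω) = Φ (W ω) - Φ 0 := by
    intro ω
    have : (∫ x, K x ω) = ∫ x in Ico 0 (W ω), ψ x := by
      rw [hK]
      exact integral_indicator measurableSet_Ico
    rw [this, integral_Ico_eq_integral_Ioo, ← integral_Ioc_eq_integral_Ioo,
      ← intervalIntegral.integral_of_le (hWnonneg ω)]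
    exact intervalIntegral.integral_eq_sub_of_hasDerivAt (fun t _ => hΦ t)
      ((hψc.intervalIntegrable _ _))
  rw [h1]
  calc ∫ x, ((ρ x).toNNReal : ℝ) • ψ x
      = ∫ x, ∫ ω, K x ω ∂μ := by
        refine integral_congr_ae (ae_of_all _ fun x => ?_)
        exact (hinner x).symm
    _ = ∫ ω, (∫ x, K x ω) ∂μ := integral_integral_swap hKint
    _ = ∫ ω, (Φ (W ω) - Φ 0) ∂μ := integral_congr_ae (ae_of_all _ fun ω => houter ω)

lemma integrable_We (hWmeas : Measurable W) (hWemeas : Measurable We)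
    (hWnonneg : ∀ ω, 0 ≤ W ω) (hWint : Integrable W μ)
    (hW2 : Integrable (fun ω => (W ω) ^ 2) μ) (hEW : ∫ ω, W ω ∂μ = 1)
    (hWe : IsEquilibrium μ W We) : Integrable We μ := by
  set ρ : ℝ → ℝ≥0∞ := fun x => if 0 ≤ x then μ {ω | x < W ω} else 0 with hρ
  refine ⟨hWemeas.aestronglyMeasurable, ?_⟩
  show (∫⁻ ω, (‖We ω‖₊ : ℝ≥0∞) ∂μ) < ⊤
  have h1 : (∫⁻ ω, (‖We ω‖₊ : ℝ≥0∞) ∂μ) = ∫⁻ x, ρ x * ‖x‖₊ ∂volume := by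
    rw [← lintegral_map (f := fun x : ℝ => (‖x‖₊ : ℝ≥0∞)) measurable_nnnorm.coe_nnreal_ennreal
      hWemeas, map_We_eq hEW hWe,
      lintegral_withDensity_eq_lintegral_mul volume rho_meas
        measurable_nnnorm.coe_nnreal_ennreal]
    rfl
  have h2 : ∀ x : ℝ, ρ x * ‖x‖₊
      ≤ (Ioi (0:ℝ)).indicator (fun t => μ {ω | t < W ω} * ENNReal.ofReal t) x := by
    intro x
    rcases lt_trichotomy x 0 with hx | hx | hx
    · rw [hρ]; simp [not_le.2 hx, Set.indicator_apply, not_lt.2 hx.le]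
    · subst hx; simp
    · rw [Set.indicator_of_mem (mem_Ioi.2 hx), hρ]
      simp only [if_pos hx.le]
      rw [show ((‖x‖₊ : ℝ≥0∞)) = ENNReal.ofReal x by
        rw [← Real.enorm_eq_ofReal hx.le]; rfl]
  have h4 := lintegral_comp_eq_lintegral_meas_lt_mul μ (ae_of_all _ hWnonneg)
    hWmeas.aemeasurable (g := fun t => t) (fun t _ => continuous_id.intervalIntegrable _ _)
    ((ae_restrict_iff' measurableSet_Ioi).2 (ae_of_all _ fun t ht => ht.le))
  have h5 : (∫⁻ ω, ENNReal.ofReal (∫ t in (0:ℝ)..W ω, t) ∂μ)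
      = ∫⁻ ω, ENNReal.ofReal ((W ω) ^ 2 / 2) ∂μ := by
    refine lintegral_congr fun ω => ?_
    rw [integral_id]
    norm_num
  have h6 : (∫⁻ ω, ENNReal.ofReal ((W ω) ^ 2 / 2) ∂μ) < ⊤ := by
    rw [← ofReal_integral_eq_lintegral_ofReal (hW2.div_const 2)
      (ae_of_all _ fun ω => by positivity)]
    exact ENNReal.ofReal_lt_top
  calc (∫⁻ ω, (‖We ω‖₊ : ℝ≥0∞) ∂μ)
      = ∫⁻ x, ρ x * ‖x‖₊ ∂volume := h1
    _ ≤ ∫⁻ x, (Ioi (0:ℝ)).indicator (fun t => μ {ω | t < W ω} * ENNReal.ofReal t) x ∂volume :=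
        lintegral_mono h2
    _ = ∫⁻ t in Ioi 0, μ {ω | t < W ω} * ENNReal.ofReal t ∂volume :=
        lintegral_indicator measurableSet_Ioi _
    _ = ∫⁻ ω, ENNReal.ofReal (∫ t in (0:ℝ)..W ω, t) ∂μ := h4.symm
    _ < ⊤ := by rw [h5]; exact h6

end MeasAux

end WassExpAux

open WassExpAux

theorem wasserstein_bound_equilibrium_coupling
    {Ω : Type*} [MeasurableSpace Ω] (μ : Measure Ω) [IsProbabilityMeasure μ]
    (W We : Ω → ℝ) (hWmeas : Measurable W) (hWemeas : Measurable We)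
    (hWnonneg : ∀ ω, 0 ≤ W ω) (hWint : Integrable W μ)
    (hW2 : Integrable (fun ω => (W ω) ^ 2) μ)
    (hEW : ∫ ω, W ω ∂μ = 1)
    (hWe : IsEquilibrium μ W We) :
    dW (Measure.map W μ) (expMeasure 1) ≤ 2 * ∫ ω, |We ω - W ω| ∂μ := by
  have hWeint : Integrable We μ := integrable_We hWmeas hWemeas hWnonneg hWint hW2 hEW hWe
  have habsint : Integrable (fun ω => 2 * |We ω - W ω|) μ :=
    ((hWeint.sub hWint).abs).const_mul 2
  have key : ∀ h : ℝ → ℝ, LipschitzWith 1 h →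
      |∫ x, h x ∂(Measure.map W μ) - ∫ x, h x ∂(expMeasure 1)|
        ≤ 2 * ∫ ω, |We ω - W ω| ∂μ := by
    intro h hh
    set c := ∫ x, h x ∂(expMeasure 1) with hc
    set g : ℝ → ℝ := fun t => h t - c with hgdef
    have hg : LipschitzWith 1 g := by
      refine LipschitzWith.of_dist_le_mul fun x y => ?_
      have := hh.dist_le_mul x y
      simpa [hgdef, Real.dist_eq] using this
    -- f(0) = 0
    have hC : eqF g 0 = 0 := by
      have hsplit : eqF g 0 = (∫ t in Ioi (0:ℝ), h t * Real.exp (-t))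
          - c * ∫ t in Ioi (0:ℝ), Real.exp (-t) := by
        have heq : ∀ t : ℝ, phi g t = h t * Real.exp (-t) - c * Real.exp (-t) := by
          intro t; rw [phi, hgdef]; ring
        rw [eqF]
        calc ∫ t in Ioi (0:ℝ), phi g t
            = ∫ t in Ioi (0:ℝ), (h t * Real.exp (-t) - c * Real.exp (-t)) :=
              integral_congr_ae (ae_of_all _ fun t => heq t)
          _ = (∫ t in Ioi (0:ℝ), h t * Real.exp (-t))
              - ∫ t in Ioi (0:ℝ), c * Real.exp (-t) :=
              integral_sub (integrableOn_phi hh 0) ((integrableOn_exp_neg 0).const_mul c)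
          _ = (∫ t in Ioi (0:ℝ), h t * Real.exp (-t))
              - c * ∫ t in Ioi (0:ℝ), Real.exp (-t) := by rw [integral_const_mul]
      rw [hsplit, integral_exp_neg_Ioi, ← integral_expMeasure h, ← hc]
      simp
    have hf0 : eqf g 0 = 0 := by rw [eqf, hC]; simp
    -- integrabilities
    have hhW : Integrable (fun ω => h (W ω)) μ := by
      refine Integrable.mono' ((integrable_const |h 0|).add hWint.abs)
        (hh.continuous.measurable.comp hWmeas).aestronglyMeasurable
        (ae_of_all _ fun ω => ?_)
      have := abs_g_le hh 0 (W ω)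
      simp only [Pi.add_apply, sub_zero] at this ⊢
      rw [Real.norm_eq_abs]
      linarith [le_abs_self (W ω), abs_nonneg (W ω)]
    have hgW : Integrable (fun ω => g (W ω)) μ := by
      simp only [hgdef]
      exact hhW.sub (integrable_const c)
    have hpsiW : Integrable (fun ω => eqpsi g (W ω)) μ := by
      refine Integrable.mono' (integrable_const 1)
        ((continuous_eqpsi hg).measurable.comp hWmeas).aestronglyMeasurable
        (ae_of_all _ fun ω => ?_)
      rw [Real.norm_eq_abs]; exact abs_eqpsi_le hg _
    have hpsiWe : Integrable (fun ω => eqpsi g (We ω)) μ := by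
      refine Integrable.mono' (integrable_const 1)
        ((continuous_eqpsi hg).measurable.comp hWemeas).aestronglyMeasurable
        (ae_of_all _ fun ω => ?_)
      rw [Real.norm_eq_abs]; exact abs_eqpsi_le hg _
    have hfW : Integrable (fun ω => eqf g (W ω)) μ := by
      have heq : (fun ω => eqf g (W ω)) = fun ω => eqpsi g (W ω) - g (W ω) := by
        funext ω; rw [eqpsi]; ring
      rw [heq]
      exact hpsiW.sub hgW
    -- the equilibrium identity
    have heq := equilibrium_integral hWmeas hWemeas hWnonneg hWint hEW hWe
      (Φ := eqf g) (ψ := eqpsi g) (hasDerivAt_eqf hg) (continuous_eqpsi hg) (abs_eqpsi_le hg)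
    have h2 : ∫ ω, eqf g (W ω) ∂μ = ∫ ω, eqpsi g (We ω) ∂μ := by
      rw [heq]
      refine integral_congr_ae (ae_of_all _ fun ω => ?_)
      simp [hf0]
    have hmapW : ∫ x, h x ∂(Measure.map W μ) = ∫ ω, h (W ω) ∂μ :=
      integral_map hWmeas.aemeasurable hh.continuous.aestronglyMeasurable
    have hgWint : ∫ ω, g (W ω) ∂μ = ∫ x, h x ∂(Measure.map W μ) - c := by
      rw [hmapW]
      simp only [hgdef]
      rw [integral_sub hhW (integrable_const c), integral_const]
      simp
    have hsplit2 : ∫ ω, g (W ω) ∂μ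
        = ∫ ω, (eqpsi g (W ω) - eqpsi g (We ω)) ∂μ := by
      rw [integral_sub hpsiW hpsiWe, ← h2, ← integral_sub hpsiW hfW]
      refine integral_congr_ae (ae_of_all _ fun ω => ?_)
      simp only [eqpsi]
      ring
    calc |∫ x, h x ∂(Measure.map W μ) - ∫ x, h x ∂(expMeasure 1)|
        = |∫ ω, (eqpsi g (W ω) - eqpsi g (We ω)) ∂μ| := by
          rw [← hc, ← hgWint, hsplit2]
      _ ≤ ∫ ω, |eqpsi g (W ω) - eqpsi g (We ω)| ∂μ := by
          simpa [Real.norm_eq_abs] using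
            norm_integral_le_integral_norm (μ := μ) (fun ω => eqpsi g (W ω) - eqpsi g (We ω))
      _ ≤ ∫ ω, 2 * |We ω - W ω| ∂μ := by
          refine integral_mono_of_nonneg (ae_of_all _ fun ω => abs_nonneg _) habsint
            (ae_of_all _ fun ω => ?_)
          have := abs_eqpsi_sub hg (W ω) (We ω)
          rwa [abs_sub_comm (W ω) (We ω)] at this
      _ = 2 * ∫ ω, |We ω - W ω| ∂μ := integral_const_mul 2 _
  refine Real.iSup_le (fun p => key p.1 p.2) ?_
  have : 0 ≤ ∫ ω, |We ω - W ω| ∂μ := integral_nonneg fun ω => abs_nonneg _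
  linarith

end
end

section
/- Let W be a non-negative random variable with E W = 1 and E W² < ∞, and let W^e be a random variable having the equilibrium distribution with respect to W, defined on the same probability space. Then d_K(L(W^e), Exp(1)) ≤ E|W^e − W|, and the same bound holds for d_W(L(W^e), Exp(1)). -/
open MeasureTheory ProbabilityTheory Set

noncomputable section

open Real Filter Topology
open scoped ENNReal NNReal

set_option linter.unusedSectionVars false
set_option maxHeartbeats 1000000

namespace SteinAux

variable {Ω : Type*} [MeasurableSpace Ω] {μ : Measure Ω} [IsProbabilityMeasure μ]
  {W We : Ω → ℝ}

/-- the density -/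
def rho (μ : Measure Ω) (W : Ω → ℝ) (x : ℝ) : ℝ≥0∞ :=
  if 0 ≤ x then μ {ω | x < W ω} else 0

lemma rho_meas (hW : Measurable W) : Measurable (rho μ W) := by
  have hs : MeasurableSet {p : ℝ × Ω | p.1 < W p.2} :=
    measurableSet_lt measurable_fst (hW.comp measurable_snd)
  have h1 : Measurable fun x : ℝ => μ {ω | x < W ω} :=
    measurable_measure_prodMk_left (ν := μ) hs
  exact Measurable.ite measurableSet_Ici h1 measurable_const

lemma rho_lt_top (x : ℝ) : rho μ W x < ⊤ := by
  unfold rho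
  split
  · exact measure_lt_top μ _
  · exact ENNReal.zero_lt_top

lemma rho_mul_eq (hW : Measurable W) (g : ℝ → ℝ≥0∞) (x : ℝ) :
    rho μ W x * g x = ∫⁻ ω, (Ico 0 (W ω)).indicator g x ∂μ := by
  by_cases hx : 0 ≤ x
  · have hind : ∀ ω, (Ico 0 (W ω)).indicator g x
        = {ω | x < W ω}.indicator (fun _ => g x) ω := by
      intro ω
      by_cases h : x < W ω <;> simp [Set.indicator, hx, h]
    rw [lintegral_congr hind, lintegral_indicator_const (measurableSet_lt measurable_const hW), rho,
      if_pos hx, mul_comm]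
  · have hind : ∀ ω, (Ico 0 (W ω)).indicator g x = 0 := fun ω => by
      simp [Set.indicator, hx]
    rw [lintegral_congr hind, rho, if_neg hx, lintegral_zero, zero_mul]


lemma prod_meas (hW : Measurable W) (g : ℝ → ℝ≥0∞) (hg : Measurable g) :
    Measurable (fun p : ℝ × Ω => (Ico 0 (W p.2)).indicator g p.1) := by
  have hs : MeasurableSet {p : ℝ × Ω | 0 ≤ p.1 ∧ p.1 < W p.2} :=
    (measurableSet_le measurable_const measurable_fst).inter
      (measurableSet_lt measurable_fst (hW.comp measurable_snd))
  have : (fun p : ℝ × Ω => (Ico 0 (W p.2)).indicator g p.1)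
      = {p : ℝ × Ω | 0 ≤ p.1 ∧ p.1 < W p.2}.indicator (fun p => g p.1) := by
    funext p
    by_cases h : 0 ≤ p.1 ∧ p.1 < W p.2 <;>
      simp [Set.indicator, Set.mem_Ico, h]
  rw [this]
  exact (hg.comp measurable_fst).indicator hs

/-- Tonelli key identity -/
lemma lint_key (hW : Measurable W) (g : ℝ → ℝ≥0∞) (hg : Measurable g) :
    ∫⁻ x, rho μ W x * g x = ∫⁻ ω, ∫⁻ x in Ico 0 (W ω), g x ∂volume ∂μ := by
  have h1 : ∫⁻ x, rho μ W x * g x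
      = ∫⁻ x, ∫⁻ ω, (Ico 0 (W ω)).indicator g x ∂μ ∂volume :=
    lintegral_congr (rho_mul_eq hW g)
  rw [h1, lintegral_lintegral_swap ((prod_meas hW g hg).aemeasurable)]
  refine lintegral_congr fun ω => ?_
  rw [lintegral_indicator measurableSet_Ico]

lemma lint_rho (hW : Measurable W) (hWnn : ∀ ω, 0 ≤ W ω) :
    ∫⁻ x, rho μ W x = ∫⁻ ω, ENNReal.ofReal (W ω) ∂μ := by
  have := lint_key (μ := μ) hW (fun _ => 1) measurable_const
  simp only [mul_one, lintegral_one, Measure.restrict_apply MeasurableSet.univ,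
    Set.univ_inter] at this
  rw [this]
  refine lintegral_congr fun ω => ?_
  rw [Real.volume_Ico, sub_zero]


lemma prod_meas_real (hW : Measurable W) (g : ℝ → ℝ) (hg : Measurable g) :
    Measurable (fun p : ℝ × Ω => (Ico 0 (W p.2)).indicator g p.1) := by
  have hs : MeasurableSet {p : ℝ × Ω | 0 ≤ p.1 ∧ p.1 < W p.2} :=
    (measurableSet_le measurable_const measurable_fst).inter
      (measurableSet_lt measurable_fst (hW.comp measurable_snd))
  have : (fun p : ℝ × Ω => (Ico 0 (W p.2)).indicator g p.1)
      = {p : ℝ × Ω | 0 ≤ p.1 ∧ p.1 < W p.2}.indicator (fun p => g p.1) := by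
    funext p
    by_cases h : 0 ≤ p.1 ∧ p.1 < W p.2 <;>
      simp [Set.indicator, Set.mem_Ico, h]
  rw [this]
  exact (hg.comp measurable_fst).indicator hs

lemma lint_ofReal_W_lt_top (hWint : Integrable W μ) :
    ∫⁻ ω, ENNReal.ofReal (W ω) ∂μ < ⊤ := by
  refine lt_of_le_of_lt (lintegral_mono fun ω => ?_) hWint.hasFiniteIntegral
  exact Real.ofReal_le_enorm (W ω)

/-- Fubini key identity -/
lemma int_key (hW : Measurable W) (hWnn : ∀ ω, 0 ≤ W ω) (hWint : Integrable W μ)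
    (g : ℝ → ℝ) (hg : Measurable g) (C : ℝ) (hC : ∀ x, 0 ≤ x → |g x| ≤ C) :
    ∫ x, (rho μ W x).toReal * g x = ∫ ω, ∫ x in Ico 0 (W ω), g x ∂volume ∂μ := by
  set k : ℝ × Ω → ℝ := fun p => (Ico 0 (W p.2)).indicator g p.1 with hk
  have kmeas : Measurable k := prod_meas_real hW g hg
  have kint : Integrable k (volume.prod μ) := by
    refine ⟨kmeas.aestronglyMeasurable, ?_⟩
    have hbound : ∀ p : ℝ × Ω, (‖k p‖₊ : ℝ≥0∞)
        ≤ (Ico 0 (W p.2)).indicator (fun _ => ENNReal.ofReal C) p.1 := by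
      intro p
      by_cases h : p.1 ∈ Ico 0 (W p.2)
      · simp only [hk, Set.indicator_of_mem h]
        rw [← enorm_eq_nnnorm, ← ofReal_norm, Real.norm_eq_abs]
        exact ENNReal.ofReal_le_ofReal (hC _ h.1)
      · simp [hk, Set.indicator_of_notMem h]
    refine lt_of_le_of_lt (lintegral_mono hbound) ?_
    rw [lintegral_prod _ (prod_meas hW (fun _ => ENNReal.ofReal C)
      measurable_const).aemeasurable]
    have : ∀ x : ℝ, ∫⁻ ω, (Ico 0 (W ω)).indicator (fun _ => ENNReal.ofReal C) x ∂μ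
        = rho μ W x * ENNReal.ofReal C := fun x =>
      (rho_mul_eq hW (fun _ => ENNReal.ofReal C) x).symm
    rw [lintegral_congr this, lintegral_mul_const _ (rho_meas hW), lint_rho hW hWnn]
    exact ENNReal.mul_lt_top (lint_ofReal_W_lt_top hWint) ENNReal.ofReal_lt_top
  have swap : ∫ x, ∫ ω, k (x, ω) ∂μ ∂volume = ∫ ω, ∫ x, k (x, ω) ∂volume ∂μ :=
    integral_integral_swap kint
  have hleft : ∫ x, (rho μ W x).toReal * g x = ∫ x, ∫ ω, k (x, ω) ∂μ ∂volume := by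
    refine integral_congr_ae (Filter.Eventually.of_forall fun x => ?_)
    show (rho μ W x).toReal * g x = ∫ ω, k (x, ω) ∂μ
    by_cases hx : 0 ≤ x
    · have hind : ∀ ω, k (x, ω) = {ω | x < W ω}.indicator (fun _ => g x) ω := by
        intro ω
        by_cases h : x < W ω <;> simp [hk, Set.indicator, hx, h]
      rw [integral_congr_ae (Filter.Eventually.of_forall hind),
        integral_indicator_const (g x) (measurableSet_lt measurable_const hW)]
      rw [rho, if_pos hx, smul_eq_mul]
      rfl
    · have hind : ∀ ω, k (x, ω) = 0 := fun ω => by simp [hk, Set.indicator, hx]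
      rw [integral_congr_ae (Filter.Eventually.of_forall hind), integral_zero,
        rho, if_neg hx]
      simp
  have hright : ∀ ω, ∫ x, k (x, ω) ∂volume = ∫ x in Ico 0 (W ω), g x ∂volume := by
    intro ω
    show ∫ x, (Ico 0 (W ω)).indicator g x ∂volume = _
    rw [integral_indicator measurableSet_Ico]
  rw [hleft, swap]
  exact integral_congr_ae (Filter.Eventually.of_forall hright)


lemma map_eq (hEW : ∫ ω, W ω ∂μ = 1) (hWe : IsEquilibrium μ W We) :
    Measure.map We μ = volume.withDensity (rho μ W) := by
  rw [hWe]
  congr 1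
  funext x
  rw [hEW]
  simp [rho]

lemma withDensity_toNNReal :
    volume.withDensity (rho μ W)
      = volume.withDensity (fun x => ((rho μ W x).toNNReal : ℝ≥0∞)) := by
  congr 1
  funext x
  rw [ENNReal.coe_toNNReal (rho_lt_top x).ne]

lemma integral_nu (hW : Measurable W) (g : ℝ → ℝ) :
    ∫ x, g x ∂(volume.withDensity (rho μ W)) = ∫ x, (rho μ W x).toReal * g x := by
  rw [withDensity_toNNReal (μ := μ) (W := W),
    integral_withDensity_eq_integral_smul
      (f := fun x => (rho μ W x).toNNReal)
      (ENNReal.measurable_toNNReal.comp (rho_meas hW)) g]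
  refine integral_congr_ae (Filter.Eventually.of_forall fun x => ?_)
  simp [NNReal.smul_def, ENNReal.toReal]

/-- the equilibrium identity -/
lemma equilibrium_integral (hW : Measurable W) (hWnn : ∀ ω, 0 ≤ W ω)
    (hWint : Integrable W μ)
    (g f : ℝ → ℝ) (hg : Measurable g) (C : ℝ) (hC : ∀ x, 0 ≤ x → |g x| ≤ C)
    (hfg : ∀ b, 0 ≤ b → ∫ x in Ico 0 b, g x = f b) :
    ∫ x, g x ∂(volume.withDensity (rho μ W)) = ∫ ω, f (W ω) ∂μ := by
  rw [integral_nu hW g, int_key hW hWnn hWint g hg C hC]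
  exact integral_congr_ae (Filter.Eventually.of_forall fun ω => hfg (W ω) (hWnn ω))

lemma nu_Iio_zero : (volume.withDensity (rho μ W)) (Iio 0) = 0 := by
  rw [withDensity_apply _ measurableSet_Iio]
  rw [setLIntegral_congr_fun measurableSet_Iio
    (fun ⦃x⦄ (hx : x < 0) => by
      rw [rho, if_neg (not_le.mpr hx)])]
  simp

lemma nu_ae_nonneg : ∀ᵐ x ∂(volume.withDensity (rho μ W)), 0 ≤ x := by
  rw [ae_iff]
  convert nu_Iio_zero (μ := μ) (W := W) using 2
  ext x
  simp

lemma nu_singleton (z : ℝ) : (volume.withDensity (rho μ W)) {z} = 0 :=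
  withDensity_absolutelyContinuous _ _ (measure_singleton z)

lemma nu_prob (hW : Measurable W) (hWnn : ∀ ω, 0 ≤ W ω) (hWemeas : Measurable We)
    (hEW : ∫ ω, W ω ∂μ = 1) (hWe : IsEquilibrium μ W We) :
    IsProbabilityMeasure (volume.withDensity (rho μ W)) := by
  rw [← map_eq hEW hWe]
  exact Measure.isProbabilityMeasure_map hWemeas.aemeasurable

lemma nu_first_moment (hW : Measurable W) (hWnn : ∀ ω, 0 ≤ W ω)
    (hW2 : Integrable (fun ω => (W ω) ^ 2) μ) :
    Integrable (fun x => x) (volume.withDensity (rho μ W)) := by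
  refine ⟨aestronglyMeasurable_id, ?_⟩
  have hmeas : Measurable fun x : ℝ => (‖x‖₊ : ℝ≥0∞) := measurable_nnnorm.coe_nnreal_ennreal
  rw [HasFiniteIntegral]
  simp only [enorm_eq_nnnorm]
  rw [lintegral_withDensity_eq_lintegral_mul _ (rho_meas hW) hmeas]
  have := lint_key (μ := μ) hW (fun x => (‖x‖₊ : ℝ≥0∞)) hmeas
  simp only [Pi.mul_apply]
  rw [this]
  refine lt_of_le_of_lt (lintegral_mono fun ω => ?_) hW2.hasFiniteIntegral
  calc ∫⁻ x in Ico 0 (W ω), (‖x‖₊ : ℝ≥0∞) ∂volume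
      ≤ ∫⁻ _ in Ico 0 (W ω), ENNReal.ofReal (W ω) ∂volume := by
        refine setLIntegral_mono measurable_const fun x hx => ?_
        rw [← enorm_eq_nnnorm, ← ofReal_norm, Real.norm_eq_abs,
          abs_of_nonneg hx.1]
        exact ENNReal.ofReal_le_ofReal hx.2.le
    _ = ENNReal.ofReal (W ω) * ENNReal.ofReal (W ω) := by
        rw [setLIntegral_const, Real.volume_Ico, sub_zero]
    _ ≤ (‖W ω ^ 2‖₊ : ℝ≥0∞) := by
        rw [← ENNReal.ofReal_mul (hWnn ω), ← sq, ← enorm_eq_nnnorm, ← ofReal_norm,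
          Real.norm_eq_abs, abs_of_nonneg (sq_nonneg _)]


/-! ### Facts about the exponential measure -/

lemma expMeasure_one_eq : expMeasure 1 = volume.withDensity (exponentialPDF 1) := rfl

lemma expMeasure_Iic (z : ℝ) :
    ((expMeasure 1) (Iic z)).toReal = if 0 ≤ z then 1 - Real.exp (-z) else 0 := by
  rw [expMeasure_one_eq, withDensity_apply _ measurableSet_Iic,
    lintegral_exponentialPDF_eq_antiDeriv one_pos z, ENNReal.toReal_ofReal]
  · split_ifs with h
    · norm_num
    · rfl
  · split_ifs with h
    · have h1 : Real.exp (-(1 * z)) ≤ 1 := Real.exp_le_one_iff.mpr (by linarith)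
      linarith
    · exact le_refl 0

lemma integral_withDensity_ofReal {d : ℝ → ℝ} (hd : Measurable d) (hdnn : ∀ x, 0 ≤ d x)
    (g : ℝ → ℝ) :
    ∫ x, g x ∂(volume.withDensity (fun x => ENNReal.ofReal (d x)))
      = ∫ x, d x * g x := by
  have h1 : (fun x => ENNReal.ofReal (d x)) = fun x => ((Real.toNNReal (d x) : ℝ≥0) : ℝ≥0∞) := by
    funext x; rfl
  rw [h1, integral_withDensity_eq_integral_smul (f := fun x => Real.toNNReal (d x))
    (measurable_real_toNNReal.comp hd) g]
  refine integral_congr_ae (Filter.Eventually.of_forall fun x => ?_)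
  simp [NNReal.smul_def, Real.coe_toNNReal _ (hdnn x)]

lemma integral_expMeasure (h : ℝ → ℝ) :
    ∫ x, h x ∂(expMeasure 1) = ∫ t in Ioi (0:ℝ), Real.exp (-t) * h t := by
  have hpdf : exponentialPDF 1 = fun x => ENNReal.ofReal (exponentialPDFReal 1 x) := rfl
  rw [expMeasure_one_eq, hpdf,
    integral_withDensity_ofReal (measurable_exponentialPDFReal 1)
      (exponentialPDFReal_nonneg one_pos) h]
  have : ∀ x : ℝ, exponentialPDFReal 1 x * h x
      = (Ici (0:ℝ)).indicator (fun t => Real.exp (-t) * h t) x := by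
    intro x
    rw [exponentialPDFReal, gammaPDFReal]
    by_cases hx : 0 ≤ x <;>
      simp [Set.indicator, hx, Real.Gamma_one]
  rw [integral_congr_ae (Filter.Eventually.of_forall this),
    integral_indicator measurableSet_Ici, integral_Ici_eq_integral_Ioi]

/-! ### Improper integral computations -/

lemma exp_neg_ioi_integrable (x : ℝ) :
    IntegrableOn (fun t => Real.exp (-t)) (Ioi x) volume := by
  have := exp_neg_integrableOn_Ioi x zero_lt_one
  simpa using this

lemma hasDerivAt_G (x t : ℝ) :
    HasDerivAt (fun t => -(Real.exp (-t) * (t - x + 1))) (Real.exp (-t) * (t - x)) t := by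
  have h1 : HasDerivAt (fun t : ℝ => -t) (-1) t := (hasDerivAt_id t).neg
  have h2 : HasDerivAt (fun t : ℝ => Real.exp (-t)) (Real.exp (-t) * (-1)) t := h1.exp
  have h3 : HasDerivAt (fun t : ℝ => t - x + 1) 1 t := ((hasDerivAt_id t).sub_const x).add_const 1
  have h4 := (h2.mul h3).neg
  exact h4.congr_deriv (by ring)

lemma tendsto_G (x : ℝ) :
    Filter.Tendsto (fun t => -(Real.exp (-t) * (t - x + 1))) atTop (𝓝 0) := by
  have h1 : Filter.Tendsto (fun t : ℝ => t * Real.exp (-t)) atTop (𝓝 0) := by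
    simpa using Real.tendsto_pow_mul_exp_neg_atTop_nhds_zero 1
  have h2 : Filter.Tendsto (fun t : ℝ => Real.exp (-t)) atTop (𝓝 0) :=
    Real.tendsto_exp_neg_atTop_nhds_zero
  have h3 : Filter.Tendsto (fun t : ℝ => -(t * Real.exp (-t) + (1 - x) * Real.exp (-t)))
      atTop (𝓝 (-(0 + (1 - x) * 0))) := (h1.add (h2.const_mul (1 - x))).neg
  simp only [mul_zero, add_zero, neg_zero] at h3
  refine h3.congr fun t => ?_
  ring

lemma G_continuous (x : ℝ) : Continuous (fun t => -(Real.exp (-t) * (t - x + 1))) := by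
  continuity

lemma A_nonneg (x : ℝ) : ∀ t ∈ Ioi x, 0 ≤ Real.exp (-t) * (t - x) := fun t ht =>
  mul_nonneg (Real.exp_pos _).le (sub_nonneg.mpr (le_of_lt ht))

lemma A_integrable (x : ℝ) :
    IntegrableOn (fun t => Real.exp (-t) * (t - x)) (Ioi x) volume :=
  integrableOn_Ioi_deriv_of_nonneg (G_continuous x).continuousWithinAt
    (fun t _ => hasDerivAt_G x t) (A_nonneg x) (tendsto_G x)

lemma A_value (x : ℝ) :
    ∫ t in Ioi x, Real.exp (-t) * (t - x) = Real.exp (-x) := by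
  have h := integral_Ioi_of_hasDerivAt_of_nonneg (G_continuous x).continuousWithinAt
    (fun t _ => hasDerivAt_G x t) (A_nonneg x) (tendsto_G x)
  simpa using h


/-! ### The Stein solution for a Lipschitz test function -/

section SteinW

variable {h : ℝ → ℝ}

lemma phi_integrableOn (hh : Continuous h) (hL : ∀ a b, |h a - h b| ≤ |a - b|) (x : ℝ) :
    IntegrableOn (fun t => Real.exp (-t) * h t) (Ioi x) volume := by
  refine Integrable.mono'
    (g := fun t => |h x| * Real.exp (-t) + Real.exp (-t) * (t - x))
    (((exp_neg_ioi_integrable x).const_mul _).add (A_integrable x))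
    ((Real.continuous_exp.comp continuous_neg).mul hh).aestronglyMeasurable ?_
  refine (ae_restrict_iff' measurableSet_Ioi).mpr (Filter.Eventually.of_forall fun t ht => ?_)
  have h1 : |h t| ≤ (t - x) + |h x| := by
    have := hL t x
    have habs : |h t| - |h x| ≤ |h t - h x| := abs_sub_abs_le_abs_sub _ _
    have h5 : |h t - h x| ≤ |t - x| := hL t x
    have h6 : |t - x| = t - x := abs_of_nonneg (sub_nonneg.mpr (le_of_lt ht))
    linarith
  have h2 : ‖Real.exp (-t) * h t‖ = Real.exp (-t) * |h t| := by
    rw [Real.norm_eq_abs, abs_mul, abs_of_pos (Real.exp_pos _)]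
  rw [h2]
  have h3 : Real.exp (-t) * |h t| ≤ Real.exp (-t) * ((t - x) + |h x|) :=
    mul_le_mul_of_nonneg_left h1 (Real.exp_pos _).le
  calc Real.exp (-t) * |h t| ≤ Real.exp (-t) * ((t - x) + |h x|) := h3
    _ = |h x| * Real.exp (-t) + Real.exp (-t) * (t - x) := by ring

/-- `I h x = ∫_x^∞ e^{-t} h t dt` -/
def If (h : ℝ → ℝ) (x : ℝ) : ℝ := ∫ t in Ioi x, Real.exp (-t) * h t

/-- The Stein solution `f`. -/
def fS (h : ℝ → ℝ) (x : ℝ) : ℝ := If h 0 - Real.exp x * If h x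

/-- Its derivative. -/
def gS (h : ℝ → ℝ) (x : ℝ) : ℝ := h x - Real.exp x * If h x

lemma If_split (hh : Continuous h) (hL : ∀ a b, |h a - h b| ≤ |a - b|)
    {a b : ℝ} (hab : a ≤ b) :
    If h a = (∫ t in a..b, Real.exp (-t) * h t) + If h b := by
  rw [intervalIntegral.integral_of_le hab, If, If, ← Ioc_union_Ioi_eq_Ioi hab,
    setIntegral_union (Ioc_disjoint_Ioi le_rfl) measurableSet_Ioi
      ((phi_integrableOn hh hL a).mono_set Ioc_subset_Ioi_self)
      (phi_integrableOn hh hL b)]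

lemma If_eq (hh : Continuous h) (hL : ∀ a b, |h a - h b| ≤ |a - b|) (x : ℝ) :
    If h x = If h 0 - ∫ t in (0:ℝ)..x, Real.exp (-t) * h t := by
  rcases le_total 0 x with hx | hx
  · rw [If_split hh hL hx]; ring
  · rw [If_split hh hL hx (a := x), intervalIntegral.integral_symm]
    ring

lemma hasDerivAt_If (hh : Continuous h) (hL : ∀ a b, |h a - h b| ≤ |a - b|) (x : ℝ) :
    HasDerivAt (If h) (-(Real.exp (-x) * h x)) x := by
  have hφc : Continuous fun t => Real.exp (-t) * h t :=
    (Real.continuous_exp.comp continuous_neg).mul hh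
  have hJ : HasDerivAt (fun u => ∫ t in (0:ℝ)..u, Real.exp (-t) * h t)
      (Real.exp (-x) * h x) x :=
    intervalIntegral.integral_hasDerivAt_right (hφc.intervalIntegrable 0 x)
      (hφc.stronglyMeasurableAtFilter _ _) hφc.continuousAt
  have : HasDerivAt (fun u => If h 0 - ∫ t in (0:ℝ)..u, Real.exp (-t) * h t)
      (-(Real.exp (-x) * h x)) x := hJ.const_sub _
  exact this.congr_of_eventuallyEq
    (Filter.Eventually.of_forall fun u => If_eq hh hL u)

lemma hasDerivAt_fS (hh : Continuous h) (hL : ∀ a b, |h a - h b| ≤ |a - b|) (x : ℝ) :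
    HasDerivAt (fS h) (gS h x) x := by
  have h1 : HasDerivAt (fun u => Real.exp u * If h u)
      (Real.exp x * If h x + Real.exp x * -(Real.exp (-x) * h x)) x :=
    (Real.hasDerivAt_exp x).mul (hasDerivAt_If hh hL x)
  have h2 := h1.const_sub (If h 0)
  have hxx : Real.exp x * (Real.exp (-x) * h x) = h x := by
    rw [← mul_assoc, ← Real.exp_add, add_neg_cancel, Real.exp_zero, one_mul]
  have h4 : gS h x = -(Real.exp x * If h x + Real.exp x * -(Real.exp (-x) * h x)) := by
    rw [gS]; linear_combination -hxx
  rw [h4]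
  exact h2.congr_of_eventuallyEq (Filter.Eventually.of_forall fun u => rfl)

lemma gS_eq (hh : Continuous h) (hL : ∀ a b, |h a - h b| ≤ |a - b|) (x : ℝ) :
    gS h x = Real.exp x * ∫ t in Ioi x, Real.exp (-t) * (h x - h t) := by
  have e1 : ∫ t in Ioi x, Real.exp (-t) * (h x - h t)
      = Real.exp (-x) * h x - If h x := by
    have : ∀ t : ℝ, Real.exp (-t) * (h x - h t)
        = Real.exp (-t) * h x - Real.exp (-t) * h t := fun t => by ring
    rw [integral_congr_ae (Filter.Eventually.of_forall fun t => this t),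
      integral_sub ((exp_neg_ioi_integrable x).mul_const (h x)) (phi_integrableOn hh hL x)]
    congr 1
    rw [integral_mul_const, integral_exp_neg_Ioi]
  rw [e1, mul_sub, ← mul_assoc, ← Real.exp_add, add_neg_cancel, Real.exp_zero, one_mul, gS]

lemma gS_bound (hh : Continuous h) (hL : ∀ a b, |h a - h b| ≤ |a - b|) (x : ℝ) :
    |gS h x| ≤ 1 := by
  rw [gS_eq hh hL x, abs_mul, abs_of_pos (Real.exp_pos x)]
  have hint1 : IntegrableOn (fun t => Real.exp (-t) * (h x - h t)) (Ioi x) volume :=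
    (((exp_neg_ioi_integrable x).mul_const (h x)).sub (phi_integrableOn hh hL x)).congr
      (Filter.Eventually.of_forall fun t => by simp only [Pi.sub_apply]; ring)
  have hint2 : IntegrableOn (fun t => Real.exp (-t) * |h x - h t|) (Ioi x) volume :=
    hint1.abs.congr (Filter.Eventually.of_forall fun t => by
      show |Real.exp (-t) * (h x - h t)| = _
      rw [abs_mul, abs_of_pos (Real.exp_pos _)])
  have habs : |∫ t in Ioi x, Real.exp (-t) * (h x - h t)|
      ≤ ∫ t in Ioi x, Real.exp (-t) * |h x - h t| := by
    have := norm_integral_le_integral_norm (μ := volume.restrict (Ioi x))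
      (fun t => Real.exp (-t) * (h x - h t))
    simp only [Real.norm_eq_abs] at this
    refine this.trans (le_of_eq (integral_congr_ae (Filter.Eventually.of_forall fun t => ?_)))
    show |Real.exp (-t) * (h x - h t)| = _
    rw [abs_mul, abs_of_pos (Real.exp_pos _)]
  have hmono : ∫ t in Ioi x, Real.exp (-t) * |h x - h t|
      ≤ ∫ t in Ioi x, Real.exp (-t) * (t - x) := by
    refine setIntegral_mono_on hint2 (A_integrable x) measurableSet_Ioi fun t ht => ?_
    refine mul_le_mul_of_nonneg_left ?_ (Real.exp_pos _).le
    calc |h x - h t| ≤ |x - t| := hL x t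
      _ = t - x := by rw [abs_sub_comm, abs_of_nonneg (sub_nonneg.mpr (le_of_lt ht))]
  calc Real.exp x * |∫ t in Ioi x, Real.exp (-t) * (h x - h t)|
      ≤ Real.exp x * ∫ t in Ioi x, Real.exp (-t) * (t - x) :=
        mul_le_mul_of_nonneg_left (habs.trans hmono) (Real.exp_pos _).le
    _ = 1 := by rw [A_value, ← Real.exp_add, add_neg_cancel, Real.exp_zero]


lemma fS_lip (hh : Continuous h) (hL : ∀ a b, |h a - h b| ≤ |a - b|) (a b : ℝ) :
    |fS h a - fS h b| ≤ |a - b| := by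
  have := Convex.norm_image_sub_le_of_norm_hasDerivWithin_le
    (f := fS h) (f' := gS h) (s := Set.univ) (C := 1)
    (fun x _ => (hasDerivAt_fS hh hL x).hasDerivWithinAt)
    (fun x _ => by rw [Real.norm_eq_abs]; exact gS_bound hh hL x)
    convex_univ (Set.mem_univ b) (Set.mem_univ a)
  simpa [Real.norm_eq_abs] using this

lemma gS_continuous (hh : Continuous h) (hL : ∀ a b, |h a - h b| ≤ |a - b|) :
    Continuous (gS h) := by
  have hIf : Continuous (If h) := by
    rw [continuous_iff_continuousAt]
    exact fun x => (hasDerivAt_If hh hL x).continuousAt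
  exact hh.sub (Real.continuous_exp.mul hIf)

lemma fS_zero : fS h 0 = 0 := by
  rw [fS, Real.exp_zero, one_mul, sub_self]

lemma fS_ftc (hh : Continuous h) (hL : ∀ a b, |h a - h b| ≤ |a - b|)
    (b : ℝ) (hb : 0 ≤ b) :
    ∫ x in Ico 0 b, gS h x = fS h b := by
  rw [setIntegral_congr_set Ico_ae_eq_Ioc, ← intervalIntegral.integral_of_le hb,
    intervalIntegral.integral_eq_sub_of_hasDerivAt
      (fun x _ => hasDerivAt_fS hh hL x)
      ((gS_continuous hh hL).intervalIntegrable 0 b),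
    fS_zero, sub_zero]

end SteinW


/-! ### The Stein solution for indicator test functions -/

/-- Stein derivative for the Kolmogorov case. -/
def gK (z x : ℝ) : ℝ := if x < z then Real.exp (x - z) else 0

/-- Stein solution for the Kolmogorov case. -/
def fK (z x : ℝ) : ℝ := Real.exp (min x z - z) - Real.exp (-z)

lemma gK_meas (z : ℝ) : Measurable (gK z) :=
  Measurable.ite (measurableSet_lt measurable_id measurable_const)
    (Real.measurable_exp.comp (measurable_id.sub measurable_const)) measurable_const

lemma gK_bound (z x : ℝ) : |gK z x| ≤ 1 := by
  rw [gK]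
  split_ifs with hx
  · rw [abs_of_pos (Real.exp_pos _)]
    exact Real.exp_le_one_iff.mpr (by linarith)
  · simp

lemma fK_bound (z x : ℝ) (hz : 0 ≤ z) : |fK z x| ≤ 1 := by
  rw [fK, abs_le]
  have h1 : Real.exp (min x z - z) ≤ 1 := Real.exp_le_one_iff.mpr (by
    have := min_le_right x z; linarith)
  have h2 : Real.exp (-z) ≤ 1 := Real.exp_le_one_iff.mpr (by linarith)
  have h3 := Real.exp_pos (min x z - z)
  have h4 := Real.exp_pos (-z)
  constructor <;> linarith

lemma fK_cont (z : ℝ) : Continuous (fK z) := by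
  unfold fK
  exact (Real.continuous_exp.comp ((continuous_id.min continuous_const).sub
    continuous_const)).sub continuous_const

lemma exp_abs_sub (u v : ℝ) (hu : u ≤ 0) (hv : v ≤ 0) :
    |Real.exp u - Real.exp v| ≤ |u - v| := by
  have := Convex.norm_image_sub_le_of_norm_hasDerivWithin_le
    (f := Real.exp) (f' := Real.exp) (s := Iic 0) (C := 1)
    (fun x _ => (Real.hasDerivAt_exp x).hasDerivWithinAt)
    (fun x hx => by rw [Real.norm_eq_abs, abs_of_pos (Real.exp_pos x)]
                    exact Real.exp_le_one_iff.mpr hx)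
    (convex_Iic 0) hv hu
  simpa [Real.norm_eq_abs] using this

lemma fK_lip (z : ℝ) (hz : 0 ≤ z) (a b : ℝ) : |fK z a - fK z b| ≤ |a - b| := by
  rw [fK, fK]
  have h1 : |Real.exp (min a z - z) - Real.exp (min b z - z)|
      ≤ |(min a z - z) - (min b z - z)| :=
    exp_abs_sub _ _ (by have := min_le_right a z; linarith)
      (by have := min_le_right b z; linarith)
  have h2 : |(min a z - z) - (min b z - z)| = |min a z - min b z| := by
    congr 1; ring
  have h3 : |min a z - min b z| ≤ |a - b| := by
    have := abs_min_sub_min_le_max a z b z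
    simpa using this
  calc |Real.exp (min a z - z) - Real.exp (-z) - (Real.exp (min b z - z) - Real.exp (-z))|
      = |Real.exp (min a z - z) - Real.exp (min b z - z)| := by congr 1; ring
    _ ≤ |a - b| := by rw [h2] at h1; exact h1.trans h3

lemma fK_ftc (z : ℝ) (hz : 0 ≤ z) (b : ℝ) (hb : 0 ≤ b) :
    ∫ x in Ico 0 b, gK z x = fK z b := by
  have hind : ∀ x : ℝ, gK z x = (Iio z).indicator (fun t => Real.exp (t - z)) x := by
    intro x
    rw [gK]
    by_cases hx : x < z <;> simp [Set.indicator, hx]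
  rw [integral_congr_ae (Filter.Eventually.of_forall hind),
    setIntegral_indicator measurableSet_Iio]
  have hset : Ico 0 b ∩ Iio z = Ico 0 (min b z) := by
    ext x; simp [mem_Ico, mem_Iio, lt_min_iff, and_assoc]
  have hcont : Continuous fun t : ℝ => Real.exp (t - z) := by continuity
  have hderiv : ∀ x ∈ uIcc (0:ℝ) (min b z),
      HasDerivAt (fun t : ℝ => Real.exp (t - z)) (Real.exp (x - z)) x := by
    intro x _
    have := ((hasDerivAt_id x).sub_const z).exp
    simpa using this
  rw [hset, setIntegral_congr_set Ico_ae_eq_Ioc,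
    ← intervalIntegral.integral_of_le (le_min hb hz),
    intervalIntegral.integral_eq_sub_of_hasDerivAt hderiv
      (hcont.intervalIntegrable 0 (min b z))]
  rw [fK, zero_sub]

/-! ### Integrability helpers -/

lemma bdd_integrable {α : Type*} [MeasurableSpace α] (ν : Measure α) [IsFiniteMeasure ν]
    {g : α → ℝ} (hmeas : AEStronglyMeasurable g ν) (C : ℝ) (hC : ∀ x, |g x| ≤ C) :
    Integrable g ν :=
  Integrable.mono' (integrable_const C) hmeas
    (Filter.Eventually.of_forall fun x => by rw [Real.norm_eq_abs]; exact hC x)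

lemma final_bound {Ω : Type*} [MeasurableSpace Ω] {μ : Measure Ω} {W We : Ω → ℝ}
    (hWint : Integrable W μ) (hWeint : Integrable We μ) (f : ℝ → ℝ)
    (hlip : ∀ a b, |f a - f b| ≤ |a - b|)
    (hfW : Integrable (fun ω => f (W ω)) μ) (hfWe : Integrable (fun ω => f (We ω)) μ) :
    |(∫ ω, f (W ω) ∂μ) - ∫ ω, f (We ω) ∂μ| ≤ ∫ ω, |We ω - W ω| ∂μ := by
  rw [← integral_sub hfW hfWe]
  have h1 := norm_integral_le_integral_norm (μ := μ) (fun ω => f (W ω) - f (We ω))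
  rw [Real.norm_eq_abs] at h1
  refine h1.trans (integral_mono (hfW.sub hfWe).norm ((hWeint.sub hWint).abs) fun ω => ?_)
  rw [Real.norm_eq_abs]
  calc |f (W ω) - f (We ω)| ≤ |W ω - We ω| := hlip _ _
    _ = |We ω - W ω| := abs_sub_comm _ _

end SteinAux

open SteinAux

theorem bounds_equilibrium_law_mean_difference
    {Ω : Type*} [MeasurableSpace Ω] (μ : Measure Ω) [IsProbabilityMeasure μ]
    (W We : Ω → ℝ) (hWmeas : Measurable W) (hWemeas : Measurable We)
    (hWnonneg : ∀ ω, 0 ≤ W ω) (hWint : Integrable W μ)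
    (hW2 : Integrable (fun ω => (W ω) ^ 2) μ)
    (hEW : ∫ ω, W ω ∂μ = 1)
    (hWe : IsEquilibrium μ W We) :
    dK (Measure.map We μ) (expMeasure 1) ≤ ∫ ω, |We ω - W ω| ∂μ ∧
    dW (Measure.map We μ) (expMeasure 1) ≤ ∫ ω, |We ω - W ω| ∂μ := by
  classical
  have hB0 : 0 ≤ ∫ ω, |We ω - W ω| ∂μ := integral_nonneg fun ω => abs_nonneg _
  have hmap : Measure.map We μ = volume.withDensity (rho μ W) := map_eq hEW hWe
  set ν := volume.withDensity (rho μ W) with hν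
  have hprob : IsProbabilityMeasure ν := nu_prob hWmeas hWnonneg hWemeas hEW hWe
  have hWe1 : Integrable (fun x => x) ν := nu_first_moment hWmeas hWnonneg hW2
  have hWeint : Integrable We μ := by
    have h1 : Integrable (fun x => x) (Measure.map We μ) := by rw [hmap]; exact hWe1
    have h2 := (integrable_map_measure aestronglyMeasurable_id hWemeas.aemeasurable).mp h1
    simpa [Function.comp] using h2
  have htrans : ∀ f : ℝ → ℝ, Continuous f → Integrable f ν →
      (∫ x, f x ∂ν = ∫ ω, f (We ω) ∂μ) ∧ Integrable (fun ω => f (We ω)) μ := by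
    intro f hc hi
    constructor
    · rw [← hmap]
      exact integral_map hWemeas.aemeasurable hc.aestronglyMeasurable
    · have h1 : Integrable f (Measure.map We μ) := by rw [hmap]; exact hi
      have h2 := (integrable_map_measure hc.aestronglyMeasurable hWemeas.aemeasurable).mp h1
      exact h2
  constructor
  · -- Kolmogorov distance
    unfold dK
    refine Real.iSup_le (fun z => ?_) hB0
    rw [hmap]
    rcases lt_or_ge z 0 with hz | hz
    · have h1 : ν (Iic z) = 0 :=
        measure_mono_null (fun x (hx : x ≤ z) => lt_of_le_of_lt hx hz) nu_Iio_zero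
      rw [h1, expMeasure_Iic, if_neg (not_le.mpr hz)]
      simpa using hB0
    · have S1 : ∫ x, gK z x ∂ν = ∫ ω, fK z (W ω) ∂μ :=
        equilibrium_integral hWmeas hWnonneg hWint _ _ (gK_meas z) 1
          (fun x _ => gK_bound z x) (fun b hb => fK_ftc z hz b hb)
      have hfKint : Integrable (fK z) ν :=
        bdd_integrable ν (fK_cont z).aestronglyMeasurable 1 (fun x => fK_bound z x hz)
      have hindint : Integrable ((Iic z).indicator fun _ => (1:ℝ)) ν :=
        (integrable_const (1:ℝ)).indicator measurableSet_Iic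
      have hae : ∀ᵐ x ∂ν, gK z x
          = fK z x + ((Iic z).indicator (fun _ => (1:ℝ)) x - (1 - Real.exp (-z))) := by
        have h1 : ∀ᵐ x ∂ν, 0 ≤ x := nu_ae_nonneg
        have h2 : ∀ᵐ x ∂ν, x ≠ z := by
          rw [ae_iff]
          convert nu_singleton (μ := μ) (W := W) z using 2
          ext x; simp
        filter_upwards [h1, h2] with x hx hxz
        rcases lt_or_gt_of_ne hxz with hlt | hgt
        · rw [gK, if_pos hlt, fK, min_eq_left hlt.le,
            Set.indicator_of_mem (mem_Iic.mpr hlt.le)]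
          ring
        · rw [gK, if_neg (not_lt.mpr hgt.le), fK, min_eq_right hgt.le,
            Set.indicator_of_notMem (by simpa [mem_Iic] using hgt)]
          rw [sub_self, Real.exp_zero]
          ring
      have S2 : ∫ x, gK z x ∂ν
          = (∫ x, fK z x ∂ν) + ((ν (Iic z)).toReal - (1 - Real.exp (-z))) := by
        have hsub : Integrable
            (fun a : ℝ => (Iic z).indicator (fun _ => (1:ℝ)) a - (1 - Real.exp (-z))) ν :=
          hindint.sub (integrable_const _)
        rw [integral_congr_ae hae, integral_add hfKint hsub,
          integral_sub hindint (integrable_const _),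
          integral_indicator_const _ measurableSet_Iic, integral_const]
        simp
        rfl
      have htr := htrans (fK z) (fK_cont z) hfKint
      have key : (ν (Iic z)).toReal - (1 - Real.exp (-z))
          = (∫ ω, fK z (W ω) ∂μ) - ∫ ω, fK z (We ω) ∂μ := by
        rw [← htr.1]
        linarith [S1, S2]
      have hfKW : Integrable (fun ω => fK z (W ω)) μ :=
        bdd_integrable μ ((fK_cont z).measurable.comp hWmeas).aestronglyMeasurable 1
          (fun ω => fK_bound z _ hz)
      have hfinal := final_bound hWint hWeint (fK z) (fK_lip z hz) hfKW htr.2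
      rw [expMeasure_Iic, if_pos hz]
      calc |(ν (Iic z)).toReal - (1 - Real.exp (-z))|
          = |(∫ ω, fK z (W ω) ∂μ) - ∫ ω, fK z (We ω) ∂μ| := by rw [key]
        _ ≤ ∫ ω, |We ω - W ω| ∂μ := hfinal
  · -- Wasserstein distance
    unfold dW
    refine Real.iSup_le (fun hfun => ?_) hB0
    obtain ⟨h, hLip⟩ := hfun
    simp only
    have hc : Continuous h := hLip.continuous
    have hL : ∀ a b, |h a - h b| ≤ |a - b| := fun a b => by
      have := hLip.dist_le_mul a b
      rwa [Real.dist_eq, Real.dist_eq, NNReal.coe_one, one_mul] at this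
    rw [hmap]
    have hm : ∫ x, h x ∂(expMeasure 1) = If h 0 := integral_expMeasure h
    have S1 : ∫ x, gS h x ∂ν = ∫ ω, fS h (W ω) ∂μ :=
      equilibrium_integral hWmeas hWnonneg hWint _ _ (gS_continuous hc hL).measurable 1
        (fun x _ => gS_bound hc hL x) (fS_ftc hc hL)
    have hfScont : Continuous (fS h) := by
      rw [continuous_iff_continuousAt]
      exact fun x => (hasDerivAt_fS hc hL x).continuousAt
    have hfSbound : ∀ x : ℝ, |fS h x| ≤ |x| := fun x => by
      have := fS_lip hc hL x 0
      simpa [fS_zero] using this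
    have hhbound : ∀ x : ℝ, |h x| ≤ |h 0| + |x| := fun x => by
      have h1 := hL x 0
      have h2 := abs_sub_abs_le_abs_sub (h x) (h 0)
      rw [sub_zero] at h1
      linarith
    have hfSint : Integrable (fS h) ν :=
      Integrable.mono' hWe1.abs hfScont.aestronglyMeasurable
        (Filter.Eventually.of_forall fun x => by
          rw [Real.norm_eq_abs]; exact hfSbound x)
    have hhint : Integrable h ν :=
      Integrable.mono' ((integrable_const |h 0|).add hWe1.abs) hc.aestronglyMeasurable
        (Filter.Eventually.of_forall fun x => by
          rw [Real.norm_eq_abs]; exact hhbound x)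
    have S2 : ∫ x, gS h x ∂ν = (∫ x, fS h x ∂ν) + ((∫ x, h x ∂ν) - If h 0) := by
      have hptw : ∀ x, gS h x = fS h x + (h x - If h 0) := fun x => by
        rw [gS, fS]; ring
      have hsub : Integrable (fun a : ℝ => h a - If h 0) ν :=
        hhint.sub (integrable_const _)
      rw [integral_congr_ae (Filter.Eventually.of_forall hptw),
        integral_add hfSint hsub,
        integral_sub hhint (integrable_const _), integral_const]
      simp
    have htr := htrans (fS h) hfScont hfSint
    have key : (∫ x, h x ∂ν) - ∫ x, h x ∂(expMeasure 1)
        = (∫ ω, fS h (W ω) ∂μ) - ∫ ω, fS h (We ω) ∂μ := by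
      rw [hm, ← htr.1]
      linarith [S1, S2]
    have hfSW : Integrable (fun ω => fS h (W ω)) μ :=
      Integrable.mono' hWint.abs (hfScont.measurable.comp hWmeas).aestronglyMeasurable
        (Filter.Eventually.of_forall fun ω => by
          rw [Real.norm_eq_abs]; exact hfSbound (W ω))
    rw [key]
    exact final_bound hWint hWeint (fS h) (fS_lip hc hL) hfSW htr.2

end
end
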